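/- arXiv:0806.2704 — 4 statements merged into one kernel-verified Lean document; each statement's English description precedes it below -/
import Mathlib

section
/- Let E and F be complex Banach spaces and let T : E* → F* be a linear map that is continuous with respect to the weak* topologies σ(E*, E) and σ(F*, F), and suppose that ‖T(x)‖ = inf{‖x − k‖ : k ∈ E*, T(k) = 0} for every x ∈ E* (that is, the induced injective map from the quotient E*/ker T into F* is isometric). Then the range of T is closed in the weak* topology σ(F*, F). -/
open NormedSpace

lemma weakdual_eval {E : Type*} [NormedAddCommGroup E] [NormedSpace ℂ E]
    (G : WeakDual ℂ E →ₗ[ℂ] ℂ) (hG : Continuous G) :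
    ∃ e : E, ∀ φ : StrongDual ℂ E, G (StrongDual.toWeakDual φ) = φ e := by
  classical
  have h0 : G (0 : WeakDual ℂ E) = 0 := map_zero G
  have hnb : G ⁻¹' Metric.ball 0 1 ∈ nhds (0 : WeakDual ℂ E) := by
    apply hG.continuousAt.preimage_mem_nhds
    rw [h0]
    exact Metric.ball_mem_nhds _ one_pos
  obtain ⟨U, hU, hUsub⟩ :=
    ((LinearMap.hasBasis_weakBilin (topDualPairing ℂ E)).mem_iff).1 hnb
  obtain ⟨s, r, hr, rfl⟩ := (topDualPairing ℂ E).toSeminormFamily.basisSets_iff.1 hU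
  set p := (topDualPairing ℂ E).toSeminormFamily with hp
  set L : s → (WeakDual ℂ E →ₗ[ℂ] ℂ) := fun y => (topDualPairing ℂ E).flip y with hL
  have hker : (⨅ i : s, LinearMap.ker (L i)) ≤ LinearMap.ker G := by
    intro φ hφ
    simp only [Submodule.mem_iInf, LinearMap.mem_ker] at hφ
    have hφy : ∀ y ∈ s, φ y = 0 := fun y hy => hφ ⟨y, hy⟩
    have hall : ∀ t : ℂ, ‖G (t • φ)‖ < 1 := by
      intro t
      have hmem : t • φ ∈ (s.sup p).ball 0 r := by
        change (s.sup p) (t • (id φ : StrongDual ℂ E) - 0) < r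
        rw [sub_zero]
        refine lt_of_le_of_lt ?_ hr
        apply Seminorm.finset_sup_apply_le le_rfl
        intro y hy
        have h := hφ ⟨y, hy⟩
        replace h : φ y = 0 := hφy y hy
        simp [hp, LinearMap.toSeminormFamily, LinearMap.flip_apply, h, id]
        exact (show t * φ y = 0 by rw [h, mul_zero])
      have := hUsub hmem
      simpa [mem_ball_zero_iff] using (show G (t • φ) ∈ Metric.ball (0 : ℂ) 1 from this)
    rw [LinearMap.mem_ker]
    by_contra hne
    have := hall ((2 / ‖G φ‖ : ℝ) : ℂ)
    rw [map_smul, smul_eq_mul, norm_mul, Complex.norm_real] at this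
    have hGpos : 0 < ‖G φ‖ := norm_pos_iff.2 hne
    rw [Real.norm_eq_abs, abs_of_pos (by positivity)] at this
    rw [div_mul_cancel₀ 2 (ne_of_gt hGpos)] at this
    norm_num at this
  have hspan := mem_span_of_iInf_ker_le_ker (L := L) (K := G) hker
  obtain ⟨c, hc⟩ := (Submodule.mem_span_range_iff_exists_fun ℂ).1 hspan
  refine ⟨∑ i : s, c i • (i : E), fun φ => ?_⟩
  have := congrFun (congrArg (fun (f : WeakDual ℂ E →ₗ[ℂ] ℂ) => (f : WeakDual ℂ E → ℂ))
    hc) (StrongDual.toWeakDual φ)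
  simp only [LinearMap.coe_sum, Finset.sum_apply, LinearMap.smul_apply] at this
  rw [← this]
  rw [map_sum]
  refine Finset.sum_congr rfl fun i _ => ?_
  rw [map_smul, smul_eq_mul, smul_eq_mul]
  rfl

set_option maxHeartbeats 1000000 in
/-- If a weak*-continuous linear map between duals of Banach spaces induces an
isometry of the quotient by its kernel into the codomain, then its range is
weak*-closed (the closed-range principle via Krein–Smulian). -/
theorem stmt1 (E F : Type*)
    [NormedAddCommGroup E] [NormedSpace ℂ E] [CompleteSpace E]
    [NormedAddCommGroup F] [NormedSpace ℂ F] [CompleteSpace F]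
    (T : StrongDual ℂ E →ₗ[ℂ] StrongDual ℂ F)
    -- T is weak*-to-weak* continuous
    (hwc : Continuous fun φ : WeakDual ℂ E =>
      StrongDual.toWeakDual (T (WeakDual.toStrongDual φ)))
    -- the induced map from the quotient by the kernel is isometric
    (hiso : ∀ x : StrongDual ℂ E,
      ‖T x‖ = sInf {r : ℝ | ∃ k : StrongDual ℂ E, T k = 0 ∧ r = ‖x - k‖}) :
    IsClosed (Set.range fun x : StrongDual ℂ E => StrongDual.toWeakDual (T x)) := by
  classical
  -- T is a contraction
  have hTle : ∀ x : StrongDual ℂ E, ‖T x‖ ≤ ‖x‖ := by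
    intro x
    rw [hiso x]
    have h1 : ‖x - 0‖ = ‖x‖ := by simp
    refine csInf_le ⟨0, ?_⟩ ⟨0, map_zero T, h1.symm⟩
    rintro r ⟨k, -, rfl⟩
    positivity
  -- construct the predual map `u`
  have hu0 : ∀ f : F, ∃ e : E, ∀ φ : StrongDual ℂ E, T φ f = φ e := by
    intro f
    let Gf : WeakDual ℂ E →ₗ[ℂ] ℂ :=
      { toFun := fun φ => T (WeakDual.toStrongDual φ) f
        map_add' := by
          intro a b
          show T (WeakDual.toStrongDual (a + b)) f
            = T (WeakDual.toStrongDual a) f + T (WeakDual.toStrongDual b) f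
          rw [map_add, map_add]
          rfl
        map_smul' := by
          intro a b
          show T (WeakDual.toStrongDual (a • b)) f = a • T (WeakDual.toStrongDual b) f
          rw [map_smul, map_smul]
          rfl }
    have hGf : Continuous Gf := by
      have h2 : Continuous fun ψ : WeakDual ℂ F => ψ f := WeakDual.eval_continuous f
      exact h2.comp hwc
    obtain ⟨e, he⟩ := weakdual_eval Gf hGf
    exact ⟨e, fun φ => he φ⟩
  choose u0 hu0 using hu0
  have huadd : ∀ f g : F, u0 (f + g) = u0 f + u0 g := by
    intro f g
    have h : ∀ φ : StrongDual ℂ E, φ (u0 (f + g) - (u0 f + u0 g)) = 0 := by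
      intro φ
      rw [map_sub, map_add, ← hu0, ← hu0, ← hu0, map_add]
      ring
    have := NormedSpace.eq_zero_of_forall_dual_eq_zero ℂ h
    rwa [sub_eq_zero] at this
  have husmul : ∀ (c : ℂ) (f : F), u0 (c • f) = c • u0 f := by
    intro c f
    have h : ∀ φ : StrongDual ℂ E, φ (u0 (c • f) - c • u0 f) = 0 := by
      intro φ
      rw [map_sub, map_smul, ← hu0, ← hu0, map_smul]
      simp
    have := NormedSpace.eq_zero_of_forall_dual_eq_zero ℂ h
    rwa [sub_eq_zero] at this
  have hubound : ∀ f : F, ‖u0 f‖ ≤ 1 * ‖f‖ := by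
    intro f
    rw [one_mul]
    refine NormedSpace.norm_le_dual_bound ℂ (u0 f) (norm_nonneg f) fun φ => ?_
    rw [← hu0]
    calc ‖T φ f‖ ≤ ‖T φ‖ * ‖f‖ := (T φ).le_opNorm f
      _ ≤ ‖φ‖ * ‖f‖ := by gcongr; exact hTle φ
      _ = ‖f‖ * ‖φ‖ := mul_comm _ _
  obtain ⟨u, hu⟩ : ∃ u : F →L[ℂ] E, ∀ (φ : StrongDual ℂ E) (f : F), T φ f = φ (u f) :=
    ⟨LinearMap.mkContinuous ⟨⟨u0, huadd⟩, husmul⟩ 1 hubound, fun φ f => hu0 f φ⟩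
  clear hu0 huadd husmul hubound
  -- the closure of the range of `u`
  set M : Submodule ℂ E := (LinearMap.range (u : F →ₗ[ℂ] E)).topologicalClosure with hM
  have hranM : ∀ f : F, u f ∈ M :=
    fun f => Submodule.le_topologicalClosure _ ⟨f, rfl⟩
  have hkerM : ∀ k : StrongDual ℂ E, T k = 0 → ∀ e ∈ M, k e = 0 := by
    intro k hk
    have hsub : LinearMap.range (u : F →ₗ[ℂ] E) ≤ LinearMap.ker (k : E →ₗ[ℂ] ℂ) := by
      rintro e ⟨f, rfl⟩
      have : k (u f) = T k f := (hu k f).symm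
      simp [LinearMap.mem_ker, this, hk]
    have := Submodule.topologicalClosure_minimal _ hsub (ContinuousLinearMap.isClosed_ker k)
    intro e he
    exact this he
  -- density of the image of the unit ball in the unit ball of `M`
  have hdense : ∀ e : E, e ∈ M → ‖e‖ ≤ 1 →
      e ∈ closure ((u : F → E) '' Metric.closedBall 0 1) := by
    intro e heM henorm
    by_contra hnot
    set C := closure ((u : F → E) '' Metric.closedBall (0 : F) 1) with hC
    have hCclosed : IsClosed C := isClosed_closure
    have hCconv : Convex ℝ C := by
      refine Convex.closure ?_
      exact (convex_closedBall (0 : F) 1).linear_image ((u : F →ₗ[ℂ] E).restrictScalars ℝ)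

    have hCbal : Balanced ℂ C := by
      refine Balanced.closure ?_
      intro a ha x hx
      obtain ⟨y, ⟨f, hf, rfl⟩, rfl⟩ := hx
      refine ⟨a • f, ?_, map_smul u a f⟩
      rw [Metric.mem_closedBall, dist_zero_right] at hf ⊢
      calc ‖a • f‖ = ‖a‖ * ‖f‖ := norm_smul a f
        _ ≤ 1 * 1 := by gcongr <;> simp [ha, hf]
        _ = 1 := one_mul 1
    have h0C : (0 : E) ∈ C := subset_closure ⟨0, by simp, by simp⟩
    obtain ⟨g, t, hgt, htg⟩ := geometric_hahn_banach_closed_point hCconv hCclosed hnot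
    have ht0 : 0 < t := by simpa using hgt 0 h0C
    set φ : E →L[ℂ] ℂ := g.extendRCLike with hφ
    have hφre : ∀ x : E, (φ x).re = g x := by
      intro x
      have h := g.extendRCLike_apply (𝕜 := ℂ) x
      rw [hφ, h]
      simp
    have hφC : ∀ c ∈ C, ‖φ c‖ ≤ t := by
      intro c hc
      rcases eq_or_ne (φ c) 0 with h | h
      · rw [h, norm_zero]; exact ht0.le
      · set lam : ℂ := (‖φ c‖ : ℂ) / φ c with hlamdef
        have hlam : ‖lam‖ = 1 := by
          rw [hlamdef, norm_div, Complex.norm_real, Real.norm_eq_abs,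
            abs_of_nonneg (norm_nonneg _), div_self (norm_ne_zero_iff.2 h)]
        have hmem : lam • c ∈ C := hCbal lam hlam.le (Set.smul_mem_smul_set hc)
        have hval : φ (lam • c) = (‖φ c‖ : ℂ) := by
          rw [map_smul, smul_eq_mul, hlamdef, div_mul_cancel₀ _ h]
        have hlt := hgt _ hmem
        calc ‖φ c‖ = (φ (lam • c)).re := by rw [hval, Complex.ofReal_re]
          _ = g (lam • c) := hφre _
          _ ≤ t := hlt.le
    have hTφ : ‖T φ‖ ≤ t := by
      refine ContinuousLinearMap.opNorm_le_bound _ ht0.le fun f => ?_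
      rcases eq_or_ne f 0 with rfl | hf
      · simp
      · have hfpos : (0 : ℝ) < ‖f‖ := norm_pos_iff.2 hf
        have hmem : u ((‖f‖⁻¹ : ℝ) • f) ∈ C := by
          refine subset_closure ⟨(‖f‖⁻¹ : ℝ) • f, ?_, rfl⟩
          rw [Metric.mem_closedBall, dist_zero_right, norm_smul]
          simp [abs_of_nonneg (norm_nonneg f), inv_mul_cancel₀ hfpos.ne']
        have hdec : u f = (‖f‖ : ℝ) • u ((‖f‖⁻¹ : ℝ) • f) := by
          rw [u.map_smul_of_tower, smul_smul, mul_inv_cancel₀ hfpos.ne', one_smul]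
        rw [hu φ f, hdec, φ.map_smul_of_tower, norm_smul]
        calc ‖(‖f‖ : ℝ)‖ * ‖φ (u ((‖f‖⁻¹ : ℝ) • f))‖ ≤ ‖f‖ * t := by
              rw [Real.norm_eq_abs, abs_of_nonneg (norm_nonneg f)]
              exact mul_le_mul_of_nonneg_left (hφC _ hmem) (norm_nonneg f)
          _ = t * ‖f‖ := mul_comm _ _
    have hlow : ‖φ e‖ ≤ ‖T φ‖ := by
      rw [hiso φ]
      refine le_csInf ⟨‖φ - 0‖, 0, map_zero T, rfl⟩ ?_
      rintro b ⟨k, hk, rfl⟩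
      have hke : k e = 0 := hkerM k hk e heM
      calc ‖φ e‖ = ‖(φ - k) e‖ := by
            rw [ContinuousLinearMap.sub_apply, hke, sub_zero]
        _ ≤ ‖φ - k‖ * ‖e‖ := (φ - k).le_opNorm e
        _ ≤ ‖φ - k‖ * 1 := by gcongr
        _ = ‖φ - k‖ := mul_one _
    have : t < t :=
      calc t < g e := htg
        _ = (φ e).re := (hφre e).symm
        _ ≤ ‖φ e‖ := Complex.re_le_norm _
        _ ≤ ‖T φ‖ := hlow
        _ ≤ t := hTφ
    exact lt_irrefl t this
  -- controlled surjectivity onto `M`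
  have approx : ∀ e : E, e ∈ M →
      ∃ f : F, ‖f‖ ≤ ‖e‖ ∧ ‖e - u f‖ ≤ ‖e‖ / 2 ∧ e - u f ∈ M := by
    intro e heM
    rcases eq_or_ne e 0 with rfl | he
    · exact ⟨0, by simp, by simp, by simpa using M.zero_mem⟩
    · have hnorm : (0 : ℝ) < ‖e‖ := norm_pos_iff.2 he
      have he' : (‖e‖⁻¹ : ℝ) • e ∈ M := M.smul_mem _ heM
      have hne' : ‖(‖e‖⁻¹ : ℝ) • e‖ ≤ 1 := by
        rw [norm_smul, Real.norm_eq_abs, abs_of_nonneg (by positivity),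
          inv_mul_cancel₀ hnorm.ne']
      have hmem := hdense _ he' hne'
      rw [Metric.mem_closure_iff] at hmem
      obtain ⟨z, hz, hdist⟩ := hmem (1 / 2) (by norm_num)
      obtain ⟨f', hf', rfl⟩ := hz
      rw [Metric.mem_closedBall, dist_zero_right] at hf'
      refine ⟨(‖e‖ : ℝ) • f', ?_, ?_, ?_⟩
      · rw [norm_smul, Real.norm_eq_abs, abs_of_nonneg (norm_nonneg e)]
        calc ‖e‖ * ‖f'‖ ≤ ‖e‖ * 1 := by gcongr
          _ = ‖e‖ := mul_one _
      · have hrw : e - u ((‖e‖ : ℝ) • f') = (‖e‖ : ℝ) • ((‖e‖⁻¹ : ℝ) • e - u f') := by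
          rw [smul_sub, u.map_smul_of_tower, smul_smul, mul_inv_cancel₀ hnorm.ne', one_smul]
        rw [hrw, norm_smul, Real.norm_eq_abs, abs_of_nonneg (norm_nonneg e)]
        have : ‖(‖e‖⁻¹ : ℝ) • e - u f'‖ ≤ 1 / 2 := by
          rw [← dist_eq_norm]
          exact hdist.le
        calc ‖e‖ * ‖(‖e‖⁻¹ : ℝ) • e - u f'‖ ≤ ‖e‖ * (1 / 2) := by gcongr
          _ = ‖e‖ / 2 := by ring
      · exact M.sub_mem heM (hranM _)
  choose! g hg1 hg2 hg3 using approx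
  have hsurj : ∀ e : E, e ∈ M → ∃ f : F, u f = e ∧ ‖f‖ ≤ 2 * ‖e‖ := by
    intro e heM
    set seq : ℕ → E := fun n => (fun x => x - u (g x))^[n] e with hseqdef
    have hseq_succ : ∀ n, seq (n + 1) = seq n - u (g (seq n)) := fun n => by
      rw [hseqdef]
      exact Function.iterate_succ_apply' _ n e
    have hseqM : ∀ n, seq n ∈ M := by
      intro n
      induction n with
      | zero => exact heM
      | succ n ih => rw [hseq_succ]; exact hg3 _ ih
    have hseqnorm : ∀ n, ‖seq n‖ ≤ (1 / 2) ^ n * ‖e‖ := by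
      intro n
      induction n with
      | zero => simp [hseqdef]
      | succ n ih =>
        rw [hseq_succ]
        calc ‖seq n - u (g (seq n))‖ ≤ ‖seq n‖ / 2 := hg2 _ (hseqM n)
          _ ≤ ((1 / 2) ^ n * ‖e‖) / 2 := by gcongr
          _ = (1 / 2) ^ (n + 1) * ‖e‖ := by ring
    set fs : ℕ → F := fun n => g (seq n) with hfsdef
    have hfs : ∀ n, ‖fs n‖ ≤ (1 / 2) ^ n * ‖e‖ := fun n =>
      (hg1 _ (hseqM n)).trans (hseqnorm n)
    have hsum : Summable fun n => ‖fs n‖ := by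
      refine Summable.of_nonneg_of_le (fun _ => norm_nonneg _) hfs ?_
      exact (summable_geometric_of_lt_one (by norm_num) (by norm_num)).mul_right _
    have hfsum : Summable fs := hsum.of_norm
    refine ⟨∑' n, fs n, ?_, ?_⟩
    · have hpart : ∀ n, u (∑ i ∈ Finset.range n, fs i) = e - seq n := by
        intro n
        induction n with
        | zero => simp [hseqdef]
        | succ n ih =>
          rw [Finset.sum_range_succ, map_add, ih, hseq_succ]
          abel
      have h1 : Filter.Tendsto (fun n => u (∑ i ∈ Finset.range n, fs i))
          Filter.atTop (nhds (u (∑' n, fs n))) :=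
        (u.continuous.tendsto _).comp hfsum.hasSum.tendsto_sum_nat
      have h2 : Filter.Tendsto (fun n => e - seq n) Filter.atTop (nhds (e - 0)) := by
        refine Filter.Tendsto.sub tendsto_const_nhds ?_
        rw [tendsto_zero_iff_norm_tendsto_zero]
        refine squeeze_zero (fun n => norm_nonneg _) hseqnorm ?_
        rw [show (0 : ℝ) = 0 * ‖e‖ by ring]
        exact (tendsto_pow_atTop_nhds_zero_of_lt_one (by norm_num) (by norm_num)).mul
          tendsto_const_nhds
      simp only [hpart] at h1
      have := tendsto_nhds_unique h1 h2
      rw [sub_zero] at this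
      exact this
    · calc ‖∑' n, fs n‖ ≤ ∑' n, ‖fs n‖ := norm_tsum_le_tsum_norm hsum
        _ ≤ ∑' n, (1 / 2) ^ n * ‖e‖ := by
          refine Summable.tsum_le_tsum hfs hsum ?_
          exact (summable_geometric_of_lt_one (by norm_num) (by norm_num)).mul_right _
        _ = (∑' n : ℕ, (1 / 2 : ℝ) ^ n) * ‖e‖ := tsum_mul_right
        _ = 2 * ‖e‖ := by rw [tsum_geometric_two]
  -- every functional annihilating `ker u` is in the range of `T`
  have hrange : ∀ ψ : StrongDual ℂ F, (∀ f : F, u f = 0 → ψ f = 0) →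
      ∃ φ : StrongDual ℂ E, T φ = ψ := by
    intro ψ hψ
    choose! G hG1 hG2 using hsurj
    have hψfac : ∀ f₁ f₂ : F, u f₁ = u f₂ → ψ f₁ = ψ f₂ := by
      intro f₁ f₂ h
      have := hψ (f₁ - f₂) (by rw [map_sub, h, sub_self])
      rw [map_sub, sub_eq_zero] at this
      exact this
    let φ₀ : M →ₗ[ℂ] ℂ :=
      { toFun := fun e => ψ (G (e : E))
        map_add' := by
          intro a b
          have h : u (G ((a + b : M) : E)) = u (G ((a : M) : E) + G ((b : M) : E)) := by
            rw [map_add u, hG1 _ (a + b).2, hG1 _ a.2, hG1 _ b.2, Submodule.coe_add]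
          show ψ (G ((a + b : M) : E)) = ψ (G ((a : M) : E)) + ψ (G ((b : M) : E))
          rw [hψfac _ _ h, map_add]
        map_smul' := by
          intro c a
          have h : u (G ((c • a : M) : E)) = u (c • G ((a : M) : E)) := by
            rw [map_smul u, hG1 _ (c • a).2, hG1 _ a.2, Submodule.coe_smul]
          show ψ (G ((c • a : M) : E)) = c • ψ (G ((a : M) : E))
          rw [hψfac _ _ h, map_smul] }
    have hφ₀b : ∀ e : M, ‖φ₀ e‖ ≤ (2 * ‖ψ‖) * ‖e‖ := by
      intro e
      calc ‖ψ (G (e : E))‖ ≤ ‖ψ‖ * ‖G (e : E)‖ := ψ.le_opNorm _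
        _ ≤ ‖ψ‖ * (2 * ‖(e : E)‖) := by gcongr; exact hG2 _ e.2
        _ = (2 * ‖ψ‖) * ‖e‖ := by rw [Submodule.norm_coe]; ring
    set φ₀c : M →L[ℂ] ℂ := LinearMap.mkContinuous φ₀ (2 * ‖ψ‖) hφ₀b with hφ₀cdef
    obtain ⟨φ, hφext, -⟩ := exists_extension_norm_eq M φ₀c
    refine ⟨φ, ?_⟩
    ext f
    have h1 : T φ f = φ (u f) := hu φ f
    have h2 : φ (u f) = φ₀c ⟨u f, hranM f⟩ := hφext ⟨u f, hranM f⟩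
    have h3 : φ₀c ⟨u f, hranM f⟩ = ψ (G (u f)) := rfl
    have h4 : ψ (G (u f)) = ψ f := hψfac _ _ (hG1 _ (hranM f))
    rw [h1, h2, h3, h4]
  -- conclusion: the range is an annihilator, hence weak*-closed
  have hset : (Set.range fun x : StrongDual ℂ E => StrongDual.toWeakDual (T x)) =
      ⋂ f : {f : F // u f = 0}, {ψ : WeakDual ℂ F | ψ (f : F) = 0} := by
    ext ψ
    simp only [Set.mem_range, Set.mem_iInter, Set.mem_setOf_eq]
    constructor
    · rintro ⟨φ, rfl⟩ f
      show T φ (f : F) = 0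
      rw [hu, f.2, map_zero]
    · intro h
      obtain ⟨φ, hφ⟩ := hrange (WeakDual.toStrongDual ψ) (fun f hf => h ⟨f, hf⟩)
      exact ⟨φ, by rw [hφ]; rfl⟩
  rw [hset]
  exact isClosed_iInter fun f =>
    isClosed_eq (WeakDual.eval_continuous (f : F)) continuous_const
end

section
/- Let D be a unital C*-algebra, let B be a unital complex Banach algebra with ‖1‖ = 1, and let φ₁, φ₂ : D → B be unital contractive algebra homomorphisms. Suppose S is a subset of D with φ₁(a) = φ₂(a) for all a ∈ S. Then φ₁ and φ₂ agree on the smallest norm-closed star-subalgebra of D containing S. In particular, if the smallest norm-closed star-subalgebra of D containing S is all of D, then φ₁ = φ₂. -/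
open NormedSpace

section ExpBounds
variable {B : Type*} [NormedRing B] [NormedAlgebra ℂ B] [CompleteSpace B] [NormOneClass B]

lemma aux_norm_exp_le (w : B) : ‖exp w‖ ≤ Real.exp ‖w‖ := by
  rw [exp_eq_tsum ℂ]
  refine (norm_tsum_le_tsum_norm (norm_expSeries_summable' w)).trans ?_
  rw [Real.exp_eq_exp_ℝ, exp_eq_tsum_div]
  refine Summable.tsum_le_tsum (fun n => ?_) (norm_expSeries_summable' w)
    ((norm_expSeries_div_summable ‖w‖).of_norm)
  rw [norm_smul, norm_inv, Complex.norm_natCast, div_eq_inv_mul]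
  gcongr
  exact norm_pow_le w n

lemma aux_exp_taylor2 (w : B) : ‖exp w - 1 - w‖ ≤ ‖w‖ ^ 2 * Real.exp ‖w‖ := by
  have hs := expSeries_summable' (𝕂 := ℂ) w
  have h2 := Summable.sum_add_tsum_nat_add (f := fun n => ((n.factorial : ℂ))⁻¹ • w ^ n) 2 hs
  have : exp w - 1 - w = ∑' n : ℕ, (((n + 2).factorial : ℂ))⁻¹ • w ^ (n + 2) := by
    rw [exp_eq_tsum ℂ]
    simp only at h2 ⊢
    rw [← h2]
    simp [Finset.sum_range_succ]
    abel
  rw [this]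
  have hsn : Summable fun n : ℕ => ‖(((n + 2).factorial : ℂ))⁻¹ • w ^ (n + 2)‖ :=
    ((norm_expSeries_summable' (𝕂 := ℂ) w).comp_injective (add_left_injective 2))
  refine (norm_tsum_le_tsum_norm hsn).trans ?_
  rw [Real.exp_eq_exp_ℝ, exp_eq_tsum_div]
  have hsum2 : Summable fun n : ℕ => ‖w‖ ^ 2 * (‖w‖ ^ n / n.factorial) :=
    ((norm_expSeries_div_summable ‖w‖).of_norm.mul_left _)
  rw [← tsum_mul_left]
  refine Summable.tsum_le_tsum (fun n => ?_) hsn hsum2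
  rw [norm_smul, norm_inv, Complex.norm_natCast]
  calc (((n + 2).factorial : ℝ))⁻¹ * ‖w ^ (n + 2)‖ ≤ ((n.factorial : ℝ))⁻¹ * ‖w‖ ^ (n + 2) := by
        have h1 : ((n.factorial : ℝ))⁻¹ ≥ (((n + 2).factorial : ℝ))⁻¹ := by
          apply inv_anti₀
          · positivity
          · exact_mod_cast Nat.factorial_le (by omega)
        calc (((n + 2).factorial : ℝ))⁻¹ * ‖w ^ (n + 2)‖
            ≤ ((n.factorial : ℝ))⁻¹ * ‖w‖ ^ (n + 2) := by
              exact mul_le_mul h1 (norm_pow_le w (n + 2)) (norm_nonneg _) (by positivity)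
          _ = ((n.factorial : ℝ))⁻¹ * ‖w‖ ^ (n + 2) := rfl
    _ = ‖w‖ ^ 2 * (‖w‖ ^ n / n.factorial) := by ring
end ExpBounds

section ExpBounds2
variable {B : Type*} [NormedRing B] [NormedAlgebra ℂ B] [CompleteSpace B] [NormOneClass B]

lemma aux_exp_prod_est (u v : B) (hu : ‖u‖ ≤ 1) (hv : ‖v‖ ≤ 1) :
    ‖exp (u + v) - exp u * exp v‖ ≤ 30 * (‖u‖ + ‖v‖) ^ 2 := by
  set r := ‖u‖ + ‖v‖ with hr
  have hrn : 0 ≤ r := by positivity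
  have he1 : Real.exp 1 ≤ 3 := by
    have := Real.exp_one_lt_d9.le
    linarith
  have heu : Real.exp ‖u‖ ≤ 3 := (Real.exp_le_exp.mpr hu).trans he1
  have hev : Real.exp ‖v‖ ≤ 3 := (Real.exp_le_exp.mpr hv).trans he1
  have heuv : Real.exp ‖u + v‖ ≤ 9 := by
    have h2 : ‖u + v‖ ≤ 2 := (norm_add_le u v).trans (by linarith)
    have : Real.exp ‖u + v‖ ≤ Real.exp 2 := Real.exp_le_exp.mpr h2
    have h9 : Real.exp 2 ≤ 9 := by
      have : Real.exp 2 = Real.exp 1 * Real.exp 1 := by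
        rw [← Real.exp_add]; norm_num
      nlinarith [Real.exp_pos 1]
    linarith
  have key : exp u * exp v - exp (u + v) =
      (exp u - 1 - u) * exp v + (1 + u) * (exp v - 1 - v) + u * v
        - (exp (u + v) - 1 - (u + v)) := by noncomm_ring
  have hbu : ‖u‖ ≤ r := by rw [hr]; linarith [norm_nonneg v]
  have hbv : ‖v‖ ≤ r := by rw [hr]; linarith [norm_nonneg u]
  have t1 : ‖(exp u - 1 - u) * exp v‖ ≤ 9 * r ^ 2 := by
    calc ‖(exp u - 1 - u) * exp v‖ ≤ ‖exp u - 1 - u‖ * ‖exp v‖ := norm_mul_le _ _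
      _ ≤ (‖u‖ ^ 2 * Real.exp ‖u‖) * Real.exp ‖v‖ := by
          apply mul_le_mul (aux_exp_taylor2 u) (aux_norm_exp_le v) (norm_nonneg _) (by positivity)
      _ ≤ (r ^ 2 * 3) * 3 := by
          apply mul_le_mul _ hev (Real.exp_pos _).le (by positivity)
          exact mul_le_mul (by nlinarith [norm_nonneg u]) heu (Real.exp_pos _).le (by positivity)
      _ = 9 * r ^ 2 := by ring
  have t2 : ‖(1 + u) * (exp v - 1 - v)‖ ≤ 6 * r ^ 2 := by
    calc ‖(1 + u) * (exp v - 1 - v)‖ ≤ ‖(1 : B) + u‖ * ‖exp v - 1 - v‖ := norm_mul_le _ _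
      _ ≤ 2 * (‖v‖ ^ 2 * Real.exp ‖v‖) := by
          apply mul_le_mul _ (aux_exp_taylor2 v) (norm_nonneg _) (by norm_num)
          calc ‖(1 : B) + u‖ ≤ ‖(1 : B)‖ + ‖u‖ := norm_add_le _ _
            _ ≤ 2 := by rw [norm_one]; linarith
      _ ≤ 2 * (r ^ 2 * 3) := by
          apply mul_le_mul_of_nonneg_left _ (by norm_num)
          exact mul_le_mul (by nlinarith [norm_nonneg v]) hev (Real.exp_pos _).le (by positivity)
      _ = 6 * r ^ 2 := by ring
  have t3 : ‖u * v‖ ≤ r ^ 2 := by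
    calc ‖u * v‖ ≤ ‖u‖ * ‖v‖ := norm_mul_le _ _
      _ ≤ r * r := mul_le_mul hbu hbv (norm_nonneg _) hrn
      _ = r ^ 2 := (sq r).symm
  have t4 : ‖exp (u + v) - 1 - (u + v)‖ ≤ 9 * r ^ 2 := by
    calc ‖exp (u + v) - 1 - (u + v)‖ ≤ ‖u + v‖ ^ 2 * Real.exp ‖u + v‖ := aux_exp_taylor2 _
      _ ≤ r ^ 2 * 9 := by
          apply mul_le_mul _ heuv (Real.exp_pos _).le (by positivity)
          have := norm_add_le u v
          nlinarith [norm_nonneg (u + v)]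
      _ = 9 * r ^ 2 := by ring
  calc ‖exp (u + v) - exp u * exp v‖ = ‖exp u * exp v - exp (u + v)‖ := norm_sub_rev _ _
    _ = ‖(exp u - 1 - u) * exp v + (1 + u) * (exp v - 1 - v) + u * v
        - (exp (u + v) - 1 - (u + v))‖ := by rw [key]
    _ ≤ ‖(exp u - 1 - u) * exp v + (1 + u) * (exp v - 1 - v) + u * v‖
        + ‖exp (u + v) - 1 - (u + v)‖ := norm_sub_le _ _
    _ ≤ ‖(exp u - 1 - u) * exp v + (1 + u) * (exp v - 1 - v)‖ + ‖u * v‖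
        + ‖exp (u + v) - 1 - (u + v)‖ := by gcongr; exact norm_add_le _ _
    _ ≤ ‖(exp u - 1 - u) * exp v‖ + ‖(1 + u) * (exp v - 1 - v)‖ + ‖u * v‖
        + ‖exp (u + v) - 1 - (u + v)‖ := by gcongr; exact norm_add_le _ _
    _ ≤ 9 * r ^ 2 + 6 * r ^ 2 + r ^ 2 + 9 * r ^ 2 := by gcongr
    _ ≤ 30 * r ^ 2 := by nlinarith
end ExpBounds2

section Trotter
variable {B : Type*} [NormedRing B] [NormedAlgebra ℂ B] [CompleteSpace B] [NormOneClass B]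

lemma aux_pow_sub_pow (a b : B) (K : ℝ) (hK : 1 ≤ K) (ha : ‖a‖ ≤ K) (hb : ‖b‖ ≤ K) (n : ℕ) :
    ‖a ^ n - b ^ n‖ ≤ n * K ^ n * ‖a - b‖ := by
  induction n with
  | zero => simp
  | succ n ih =>
    have hid : a ^ (n + 1) - b ^ (n + 1) = a ^ n * (a - b) + (a ^ n - b ^ n) * b := by
      noncomm_ring
    have hK0 : 0 ≤ K := le_trans zero_le_one hK
    calc ‖a ^ (n + 1) - b ^ (n + 1)‖
        ≤ ‖a ^ n * (a - b)‖ + ‖(a ^ n - b ^ n) * b‖ := by rw [hid]; exact norm_add_le _ _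
      _ ≤ ‖a ^ n‖ * ‖a - b‖ + ‖a ^ n - b ^ n‖ * ‖b‖ := by
          gcongr <;> exact norm_mul_le _ _
      _ ≤ K ^ n * ‖a - b‖ + (n * K ^ n * ‖a - b‖) * K := by
          have hK0 : (0:ℝ) ≤ K := le_trans zero_le_one hK
          have h1 : ‖a ^ n‖ ≤ K ^ n := (norm_pow_le a n).trans (pow_le_pow_left₀ (norm_nonneg a) ha n)
          refine add_le_add (mul_le_mul_of_nonneg_right h1 (norm_nonneg _)) ?_
          exact mul_le_mul ih hb (norm_nonneg _) (by positivity)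
      _ ≤ K ^ (n + 1) * ‖a - b‖ + (n * K ^ (n + 1) * ‖a - b‖) := by
          have h1 : K ^ n ≤ K ^ (n + 1) := pow_le_pow_right₀ hK (by omega)
          have h2 : (n : ℝ) * K ^ n * ‖a - b‖ * K = n * K ^ (n + 1) * ‖a - b‖ := by ring
          rw [h2]
          have h3 : K ^ n * ‖a - b‖ ≤ K ^ (n + 1) * ‖a - b‖ :=
            mul_le_mul_of_nonneg_right h1 (norm_nonneg _)
          linarith
      _ = (↑(n + 1)) * K ^ (n + 1) * ‖a - b‖ := by push_cast; ring

/-- `b` is Hermitian-like: `exp(itb)` is a contraction for all real `t`. -/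
def AuxIsH {B : Type*} [NormedRing B] [NormedAlgebra ℂ B] [CompleteSpace B] (b : B) : Prop :=
  ∀ t : ℝ, ‖exp (((t : ℂ) * Complex.I) • b)‖ ≤ 1

lemma auxIsH_add {b c : B} (hb : AuxIsH b) (hc : AuxIsH c) : AuxIsH (b + c) := by
  letI : NormedAlgebra ℚ B := .restrictScalars ℚ ℂ B
  intro t
  set x : B := ((t : ℂ) * Complex.I) • b with hxdef
  set y : B := ((t : ℂ) * Complex.I) • c with hydef
  have hx : ∀ m : ℕ, 0 < m → ‖exp ((m : ℂ)⁻¹ • x)‖ ≤ 1 := by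
    intro m hm
    have : (m : ℂ)⁻¹ • x = (((t / m : ℝ) : ℂ) * Complex.I) • b := by
      rw [hxdef, smul_smul]
      congr 1
      push_cast
      ring
    rw [this]; exact hb (t / m)
  have hy : ∀ m : ℕ, 0 < m → ‖exp ((m : ℂ)⁻¹ • y)‖ ≤ 1 := by
    intro m hm
    have : (m : ℂ)⁻¹ • y = (((t / m : ℝ) : ℂ) * Complex.I) • c := by
      rw [hydef, smul_smul]
      congr 1
      push_cast
      ring
    rw [this]; exact hc (t / m)
  have hxy : ((t : ℂ) * Complex.I) • (b + c) = x + y := by rw [hxdef, hydef, smul_add]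
  rw [hxy]
  refine le_of_forall_pos_le_add fun ε hε => ?_
  set r : ℝ := ‖x‖ + ‖y‖ with hrdef
  have hr0 : 0 ≤ r := by positivity
  set E : ℝ := Real.exp r with hEdef
  have hE0 : 0 < E := Real.exp_pos r
  obtain ⟨n, hn⟩ := exists_nat_gt (max (r + 1) (30 * r ^ 2 * E / ε))
  have hn1 : (1 : ℝ) ≤ n := by
    have := le_max_left (r + 1) (30 * r ^ 2 * E / ε)
    linarith [hn.le, hr0]
  have hnpos : 0 < n := by exact_mod_cast lt_of_lt_of_le zero_lt_one hn1
  have hnr : r ≤ (n : ℝ) := by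
    have := le_max_left (r + 1) (30 * r ^ 2 * E / ε)
    linarith [hn.le]
  have hnc : (n : ℂ) ≠ 0 := by exact_mod_cast hnpos.ne'
  set u : B := (n : ℂ)⁻¹ • x with hudef
  set v : B := (n : ℂ)⁻¹ • y with hvdef
  have hnu : ‖u‖ = ‖x‖ / n := by
    rw [hudef, norm_smul, norm_inv, Complex.norm_natCast, div_eq_inv_mul]
  have hnv : ‖v‖ = ‖y‖ / n := by
    rw [hvdef, norm_smul, norm_inv, Complex.norm_natCast, div_eq_inv_mul]
  have hxr : ‖x‖ ≤ r := by rw [hrdef]; linarith [norm_nonneg y]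
  have hyr : ‖y‖ ≤ r := by rw [hrdef]; linarith [norm_nonneg x]
  have hu1 : ‖u‖ ≤ 1 := by
    rw [hnu, div_le_one (by exact_mod_cast hnpos)]; linarith
  have hv1 : ‖v‖ ≤ 1 := by
    rw [hnv, div_le_one (by exact_mod_cast hnpos)]; linarith
  set A : B := exp (u + v) with hAdef
  set P : B := exp u * exp v with hPdef
  have hsplit : (n : ℂ)⁻¹ • (x + y) = u + v := by rw [hudef, hvdef, smul_add]
  have hAn : exp (x + y) = A ^ n := by
    rw [hAdef, ← exp_nsmul, ← Nat.cast_smul_eq_nsmul ℂ n (u + v), ← hsplit, smul_smul,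
      mul_inv_cancel₀ hnc, one_smul]
  have hPnorm : ‖P‖ ≤ 1 := by
    refine (norm_mul_le _ _).trans ?_
    calc ‖exp u‖ * ‖exp v‖ ≤ 1 * 1 :=
        mul_le_mul (hx n hnpos) (hy n hnpos) (norm_nonneg _) zero_le_one
      _ = 1 := one_mul 1
  set K : ℝ := Real.exp (r / n) with hKdef
  have hK1 : 1 ≤ K := Real.one_le_exp (by positivity)
  have hKn : K ^ n = E := by
    rw [hKdef, hEdef, ← Real.exp_nat_mul, mul_div_cancel₀]
    exact_mod_cast hnpos.ne'
  have hAnorm : ‖A‖ ≤ K := by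
    refine (aux_norm_exp_le _).trans ?_
    rw [hKdef]
    apply Real.exp_le_exp.mpr
    calc ‖u + v‖ ≤ ‖u‖ + ‖v‖ := norm_add_le _ _
      _ = (‖x‖ + ‖y‖) / n := by rw [hnu, hnv]; ring
      _ = r / n := by rw [hrdef]
  have hPK : ‖P‖ ≤ K := hPnorm.trans hK1
  have hAP : ‖A - P‖ ≤ 30 * (r / n) ^ 2 := by
    refine (aux_exp_prod_est u v hu1 hv1).trans ?_
    have heq : ‖u‖ + ‖v‖ = r / n := by rw [hnu, hnv, hrdef]; ring
    rw [heq]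
  have hfinal : ‖exp (x + y)‖ ≤ 1 + 30 * r ^ 2 * E / n := by
    rw [hAn]
    calc ‖A ^ n‖ ≤ ‖A ^ n - P ^ n‖ + ‖P ^ n‖ := by
          have := norm_add_le (A ^ n - P ^ n) (P ^ n); simpa using this
      _ ≤ n * K ^ n * ‖A - P‖ + ‖P‖ ^ n := by
          gcongr
          · exact aux_pow_sub_pow A P K hK1 hAnorm hPK n
          · exact norm_pow_le P n
      _ ≤ n * E * (30 * (r / n) ^ 2) + 1 := by
          gcongr
          · rw [hKn]
          · exact pow_le_one₀ (norm_nonneg _) hPnorm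
      _ = 1 + 30 * r ^ 2 * E / n := by
          field_simp
          ring
  refine hfinal.trans ?_
  have hgoal : 30 * r ^ 2 * E / n ≤ ε := by
    rw [div_le_iff₀ (by exact_mod_cast hnpos)]
    have h2 := (le_max_right (r + 1) (30 * r ^ 2 * E / ε)).trans hn.le
    rw [div_le_iff₀ hε] at h2
    nlinarith [hε]
  linarith

end Trotter

section Liouville
variable {B : Type*} [NormedRing B] [NormedAlgebra ℂ B] [CompleteSpace B] [NormOneClass B]

lemma auxIsH_eq_zero {b : B} (h1 : AuxIsH b) (h2 : AuxIsH (Complex.I • b)) : b = 0 := by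
  letI : NormedAlgebra ℚ B := .restrictScalars ℚ ℂ B
  have hreal : ∀ s : ℝ, ‖exp ((s : ℂ) • b)‖ ≤ 1 := by
    intro s
    have := h2 (-s)
    have heq : (((-s : ℝ) : ℂ) * Complex.I) • Complex.I • b = (s : ℂ) • b := by
      rw [smul_smul]
      congr 1
      push_cast
      rw [mul_assoc, Complex.I_mul_I]
      ring
    rwa [heq] at this
  have hbdd : ∀ z : ℂ, ‖exp (z • b)‖ ≤ 1 := by
    intro z
    have hz : z • b = ((z.re : ℂ)) • b + (((z.im : ℝ) : ℂ) * Complex.I) • b := by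
      rw [← add_smul]
      congr 1
      simpa using (Complex.re_add_im z).symm
    have hcomm : Commute (((z.re : ℂ)) • b) ((((z.im : ℝ) : ℂ) * Complex.I) • b) :=
      ((Commute.refl b).smul_left _).smul_right _
    rw [hz, exp_add_of_commute hcomm]
    calc ‖exp (((z.re : ℂ)) • b) * exp ((((z.im : ℝ) : ℂ) * Complex.I) • b)‖
        ≤ ‖exp (((z.re : ℂ)) • b)‖ * ‖exp ((((z.im : ℝ) : ℂ) * Complex.I) • b)‖ :=
          norm_mul_le _ _
      _ ≤ 1 * 1 := mul_le_mul (hreal z.re) (h1 z.im) (norm_nonneg _) zero_le_one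
      _ = 1 := one_mul 1
  have hdiff : Differentiable ℂ fun z : ℂ => exp (z • b) := fun z =>
    (hasDerivAt_exp_smul_const (𝕂 := ℂ) b z).differentiableAt
  have hrange : Bornology.IsBounded (Set.range fun z : ℂ => exp (z • b)) := by
    rw [Metric.isBounded_iff_subset_closedBall 0]
    refine ⟨1, ?_⟩
    rintro w ⟨z, rfl⟩
    simpa [Metric.mem_closedBall] using hbdd z
  have hconst : (fun z : ℂ => exp (z • b)) = fun _ => (1 : B) := by
    funext z
    have := hdiff.apply_eq_apply_of_bounded hrange z 0
    simpa [exp_zero] using this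
  have hd := hasDerivAt_exp_smul_const (𝕂 := ℂ) b 0
  rw [hconst] at hd
  have h0 : exp ((0 : ℂ) • b) * b = 0 := hd.unique (hasDerivAt_const 0 (1 : B))
  simpa [exp_zero] using h0

end Liouville

section Main
variable {D : Type*}
    [NormedRing D] [StarRing D] [CStarRing D] [CompleteSpace D]
    [NormedAlgebra ℂ D] [StarModule ℂ D]
    {B : Type*} [NormedRing B] [NormedAlgebra ℂ B] [CompleteSpace B] [NormOneClass B]

lemma aux_isH_map [Nontrivial D] (φ : D →ₐ[ℂ] B) (hc : ∀ d : D, ‖φ d‖ ≤ ‖d‖)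
    {h : D} (hh : IsSelfAdjoint h) : AuxIsH (φ h) := by
  letI : NormedAlgebra ℚ B := .restrictScalars ℚ ℂ B
  letI : NormedAlgebra ℚ D := .restrictScalars ℚ ℂ D
  have hcont : Continuous φ :=
    AddMonoidHomClass.continuous_of_bound φ 1 (fun x => by simpa using hc x)
  intro t
  have hskew : (((t : ℂ) * Complex.I)) ∈ skewAdjoint ℂ := by
    simp [skewAdjoint.mem_iff, Complex.conj_ofReal]
  have hmem : (((t : ℂ) * Complex.I)) • h ∈ skewAdjoint D :=
    hh.smul_mem_skewAdjoint hskew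
  have huni : exp ((((t : ℂ) * Complex.I)) • h) ∈ unitary D :=
    exp_mem_unitary_of_mem_skewAdjoint hmem
  have hnorm : ‖exp ((((t : ℂ) * Complex.I)) • h)‖ = 1 :=
    CStarRing.norm_coe_unitary ⟨_, huni⟩
  calc ‖exp (((t : ℂ) * Complex.I) • φ h)‖
      = ‖φ (exp ((((t : ℂ) * Complex.I)) • h))‖ := by
        rw [map_exp φ hcont, map_smul]
    _ ≤ ‖exp ((((t : ℂ) * Complex.I)) • h)‖ := hc _
    _ = 1 := hnorm

lemma auxIsH_neg {b : B} (hb : AuxIsH b) : AuxIsH (-b) := by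
  intro t
  have heq : ((t : ℂ) * Complex.I) • (-b) = (((-t : ℝ) : ℂ) * Complex.I) • b := by
    rw [smul_neg, ← neg_smul]
    congr 1
    push_cast
    ring
  rw [heq]
  exact hb (-t)

lemma aux_star_agree [Nontrivial D] (φ₁ φ₂ : D →ₐ[ℂ] B)
    (hc₁ : ∀ d : D, ‖φ₁ d‖ ≤ ‖d‖) (hc₂ : ∀ d : D, ‖φ₂ d‖ ≤ ‖d‖)
    {a : D} (ha : φ₁ a = φ₂ a) : φ₁ (star a) = φ₂ (star a) := by
  set h : D := (2⁻¹ : ℂ) • (a + star a) with hhdef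
  set k : D := ((-(2⁻¹) * Complex.I : ℂ)) • (a - star a) with hkdef
  have hmul : Complex.I * (-(2⁻¹) * Complex.I) = 2⁻¹ := by
    have := Complex.I_mul_I
    ring_nf
    rw [Complex.I_sq]
    ring
  have hh : IsSelfAdjoint h := by
    rw [IsSelfAdjoint, hhdef, star_smul, star_add, star_star]
    have h2 : star (2⁻¹ : ℂ) = (2⁻¹ : ℂ) := by simp
    rw [h2]
    exact congrArg _ (add_comm _ _)
  have hk : IsSelfAdjoint k := by
    rw [IsSelfAdjoint, hkdef, star_smul, star_sub, star_star]
    have h1 : star ((-(2⁻¹) * Complex.I : ℂ)) = (2⁻¹ : ℂ) * Complex.I := by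
      rw [star_mul', Complex.star_def, Complex.conj_I]
      rw [show (starRingEnd ℂ) (-2⁻¹ : ℂ) = (-2⁻¹ : ℂ) by simp [Complex.conj_ofNat]]
      ring
    rw [h1]
    module
  have hah : a = h + Complex.I • k := by
    rw [hhdef, hkdef, smul_smul, hmul]
    module
  have hsa : star a = h - Complex.I • k := by
    rw [hhdef, hkdef, smul_smul, hmul]
    module
  set b : B := φ₁ h - φ₂ h with hbdef
  set c : B := φ₁ k - φ₂ k with hcdef
  have hIb : AuxIsH b := by
    rw [hbdef, sub_eq_add_neg]
    exact auxIsH_add (aux_isH_map φ₁ hc₁ hh) (auxIsH_neg (aux_isH_map φ₂ hc₂ hh))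
  have hIc : AuxIsH c := by
    rw [hcdef, sub_eq_add_neg]
    exact auxIsH_add (aux_isH_map φ₁ hc₁ hk) (auxIsH_neg (aux_isH_map φ₂ hc₂ hk))
  have hsum : b + Complex.I • c = 0 := by
    have h1 : φ₁ a = φ₁ h + Complex.I • φ₁ k := by
      rw [hah]; simp only [map_add, map_smul]
    have h2 : φ₂ a = φ₂ h + Complex.I • φ₂ k := by
      rw [hah]; simp only [map_add, map_smul]
    rw [hbdef, hcdef, smul_sub]
    rw [h1, h2] at ha
    rw [← sub_eq_zero] at ha
    rw [← ha]
    abel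
  have hcb : c = Complex.I • b := by
    have hb' : b = -(Complex.I • c) := eq_neg_of_add_eq_zero_left hsum
    rw [hb', smul_neg, smul_smul, Complex.I_mul_I, neg_smul, neg_neg, one_smul]
  have hb0 : b = 0 := auxIsH_eq_zero hIb (hcb ▸ hIc)
  have hc0 : c = 0 := by rw [hcb, hb0, smul_zero]
  have e1 : φ₁ (star a) = φ₁ h - Complex.I • φ₁ k := by
    rw [hsa]; simp only [map_sub, map_smul]
  have e2 : φ₂ (star a) = φ₂ h - Complex.I • φ₂ k := by
    rw [hsa]; simp only [map_sub, map_smul]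
  have hφh : φ₁ h = φ₂ h := sub_eq_zero.mp hb0
  have hφk : φ₁ k = φ₂ k := sub_eq_zero.mp hc0
  rw [e1, e2, hφh, hφk]

end Main




/-- Two unital contractive homomorphisms from a unital C*-algebra into a unital
Banach algebra (with ‖1‖ = 1) that agree on a subset `S` agree on the smallest
norm-closed star-subalgebra containing `S`; in particular if that closed
star-subalgebra is everything, the homomorphisms are equal. -/
theorem stmt3 (D : Type*)
    [NormedRing D] [StarRing D] [CStarRing D] [CompleteSpace D]
    [NormedAlgebra ℂ D] [StarModule ℂ D]
    (B : Type*) [NormedRing B] [NormedAlgebra ℂ B] [CompleteSpace B] [NormOneClass B]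
    (φ₁ φ₂ : D →ₐ[ℂ] B)
    (hcontr₁ : ∀ d : D, ‖φ₁ d‖ ≤ ‖d‖) (hcontr₂ : ∀ d : D, ‖φ₂ d‖ ≤ ‖d‖)
    (S : Set D) (hS : ∀ a ∈ S, φ₁ a = φ₂ a) :
    (∀ x ∈ closure (StarAlgebra.adjoin ℂ S : Set D), φ₁ x = φ₂ x) ∧
    (closure (StarAlgebra.adjoin ℂ S : Set D) = Set.univ → φ₁ = φ₂) := by
  rcases subsingleton_or_nontrivial D with hD | hD
  · constructor
    · intro x _
      rw [Subsingleton.elim x (1 : D), map_one, map_one]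
    · intro _
      ext x
      rw [Subsingleton.elim x (1 : D), map_one, map_one]
  · have hcont₁ : Continuous φ₁ :=
      AddMonoidHomClass.continuous_of_bound φ₁ 1 (fun x => by simpa using hcontr₁ x)
    have hcont₂ : Continuous φ₂ :=
      AddMonoidHomClass.continuous_of_bound φ₂ 1 (fun x => by simpa using hcontr₂ x)
    have hclosed : IsClosed {x : D | φ₁ x = φ₂ x} := isClosed_eq hcont₁ hcont₂
    have hle : Algebra.adjoin ℂ (S ∪ star S) ≤ AlgHom.equalizer φ₁ φ₂ := by
      rw [Algebra.adjoin_le_iff]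
      rintro y (hy | hy)
      · exact hS y hy
      · have hy' : star y ∈ S := hy
        have := aux_star_agree φ₁ φ₂ hcontr₁ hcontr₂ (hS _ hy')
        rwa [star_star] at this
    have hsub : (StarAlgebra.adjoin ℂ S : Set D) ⊆ {x : D | φ₁ x = φ₂ x} := by
      intro x hx
      have hx' : x ∈ (StarAlgebra.adjoin ℂ S).toSubalgebra := hx
      rw [StarAlgebra.adjoin_toSubalgebra] at hx'
      exact hle hx'
    have hclos : closure (StarAlgebra.adjoin ℂ S : Set D) ⊆ {x : D | φ₁ x = φ₂ x} :=
      closure_minimal hsub hclosed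
    refine ⟨fun x hx => hclos hx, fun huniv => AlgHom.ext fun x => hclos ?_⟩
    rw [huniv]
    exact Set.mem_univ x
end

section
/- Let D be a W*-algebra and let M be a subalgebra of D containing the unit of D such that the star-subalgebra of D generated by M is weak*-dense in D (i.e., D is generated by M as a W*-algebra). Let B be a unital complex Banach algebra with ‖1‖ = 1 whose underlying Banach space is a dual Banach space. If φ₁, φ₂ : D → B are unital contractive algebra homomorphisms, each continuous from the weak* topology of D to the weak* topology of B, and φ₁(a) = φ₂(a) for all a ∈ M, then φ₁ = φ₂. -/
open NormedSpace

section aux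
open Filter Nat Topology
set_option linter.unusedSectionVars false
variable {A : Type*} [NormedRing A] [NormedAlgebra ℂ A] [CompleteSpace A] [NormOneClass A]

lemma aux_exp_tail (x : A) : ‖exp x - 1 - x‖ ≤ ‖x‖ ^ 2 * Real.exp ‖x‖ := by
  set f : ℕ → A := fun n => (n !⁻¹ : ℂ) • x ^ n with hf
  have hsum : Summable f := expSeries_summable' (𝕂 := ℂ) x
  have hsplit : (∑ i ∈ Finset.range 2, f i) + ∑' n, f (n + 2) = ∑' n, f n :=
    hsum.sum_add_tsum_nat_add 2
  have hrange : (∑ i ∈ Finset.range 2, f i) = 1 + x := by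
    simp [hf, Finset.sum_range_succ]
  have hexp : exp x - 1 - x = ∑' n, f (n + 2) := by
    simp only [exp_eq_tsum ℂ, ← hf]
    rw [← hsplit, hrange]; abel
  rw [hexp]
  have hnorm : Summable fun n => ‖f (n + 2)‖ :=
    (summable_nat_add_iff 2).2 (norm_expSeries_summable' (𝕂 := ℂ) x)
  have hg : Summable fun n : ℕ => ‖x‖ ^ 2 * (‖x‖ ^ n / n !) :=
    (Real.summable_pow_div_factorial ‖x‖).mul_left _
  have hterm : ∀ n : ℕ, ‖f (n + 2)‖ ≤ ‖x‖ ^ 2 * (‖x‖ ^ n / n !) := by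
    intro n
    have h1 : ‖f (n + 2)‖ ≤ (((n + 2)! : ℝ))⁻¹ * ‖x‖ ^ (n + 2) := by
      rw [hf, norm_smul]
      gcongr
      · simp
      · exact norm_pow_le' x (by omega)
    refine h1.trans ?_
    have h2 : (((n + 2)! : ℝ))⁻¹ ≤ ((n ! : ℝ))⁻¹ := by
      apply inv_anti₀
      · positivity
      · exact_mod_cast Nat.factorial_le (by omega)
    calc (((n + 2)! : ℝ))⁻¹ * ‖x‖ ^ (n + 2) ≤ ((n ! : ℝ))⁻¹ * ‖x‖ ^ (n + 2) := by
          gcongr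
      _ = ‖x‖ ^ 2 * (‖x‖ ^ n / n !) := by ring
  calc ‖∑' n, f (n + 2)‖ ≤ ∑' n, ‖f (n + 2)‖ := norm_tsum_le_tsum_norm hnorm
    _ ≤ ∑' n : ℕ, ‖x‖ ^ 2 * (‖x‖ ^ n / n !) := Summable.tsum_le_tsum hterm hnorm hg
    _ = ‖x‖ ^ 2 * ∑' n : ℕ, ‖x‖ ^ n / n ! := tsum_mul_left
    _ = ‖x‖ ^ 2 * Real.exp ‖x‖ := by
        rw [Real.exp_eq_exp_ℝ, exp_eq_tsum_div]


def Diss (x : A) : Prop :=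
  ∀ ε : ℝ, 0 < ε → ∃ δ : ℝ, 0 < δ ∧ ∀ s : ℝ, 0 < s → s ≤ δ → ‖1 + (s : ℂ) • x‖ ≤ 1 + ε * s


lemma diss_add {x y : A} (hx : Diss x) (hy : Diss y) : Diss (x + y) := by
  intro ε hε
  obtain ⟨δ₁, hδ₁, H₁⟩ := hx (ε / 2) (by positivity)
  obtain ⟨δ₂, hδ₂, H₂⟩ := hy (ε / 2) (by positivity)
  refine ⟨min δ₁ δ₂ / 2, by positivity, fun s hs hsδ => ?_⟩
  have h2s₁ : 2 * s ≤ δ₁ := by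
    have := min_le_left δ₁ δ₂; linarith
  have h2s₂ : 2 * s ≤ δ₂ := by
    have := min_le_right δ₁ δ₂; linarith
  have key : (1 : A) + (s : ℂ) • (x + y) =
      (2⁻¹ : ℂ) • ((1 + ((2 * s : ℝ) : ℂ) • x) + (1 + ((2 * s : ℝ) : ℂ) • y)) := by
    push_cast
    match_scalars <;> ring
  rw [key]
  have h1 := H₁ (2 * s) (by linarith) h2s₁
  have h2 := H₂ (2 * s) (by linarith) h2s₂
  calc ‖(2⁻¹ : ℂ) • ((1 + ((2 * s : ℝ) : ℂ) • x) + (1 + ((2 * s : ℝ) : ℂ) • y))‖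
      = 2⁻¹ * ‖(1 + ((2 * s : ℝ) : ℂ) • x) + (1 + ((2 * s : ℝ) : ℂ) • y)‖ := by
        rw [norm_smul]; norm_num
    _ ≤ 2⁻¹ * (‖1 + ((2 * s : ℝ) : ℂ) • x‖ + ‖1 + ((2 * s : ℝ) : ℂ) • y‖) := by
        gcongr; exact norm_add_le _ _
    _ ≤ 2⁻¹ * ((1 + ε / 2 * (2 * s)) + (1 + ε / 2 * (2 * s))) := by gcongr
    _ = 1 + ε * s := by ring

lemma diss_smul {x : A} {t : ℝ} (hx : Diss x) (ht : 0 < t) : Diss ((t : ℂ) • x) := by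
  intro ε hε
  obtain ⟨δ, hδ, H⟩ := hx (ε / t) (by positivity)
  refine ⟨δ / t, by positivity, fun s hs hsδ => ?_⟩
  have h1 : (s : ℂ) • (t : ℂ) • x = ((s * t : ℝ) : ℂ) • x := by
    rw [smul_smul]; push_cast; ring_nf
  rw [h1]
  have h2 := H (s * t) (by positivity) (by rw [← le_div_iff₀ ht]; exact hsδ)
  calc ‖1 + ((s * t : ℝ) : ℂ) • x‖ ≤ 1 + ε / t * (s * t) := h2
    _ = 1 + ε * s := by field_simp

lemma diss_of_exp_le {x : A} (h : ∀ t : ℝ, 0 < t → ‖exp ((t : ℂ) • x)‖ ≤ 1) : Diss x := by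
  intro ε hε
  set C : ℝ := ‖x‖ ^ 2 * Real.exp ‖x‖ with hC
  have hC0 : 0 ≤ C := by positivity
  refine ⟨min 1 (ε / (C + 1)), by positivity, fun s hs hsδ => ?_⟩
  have hs1 : s ≤ 1 := hsδ.trans (min_le_left _ _)
  have hs2 : s ≤ ε / (C + 1) := hsδ.trans (min_le_right _ _)
  have hnorm : ‖(s : ℂ) • x‖ = s * ‖x‖ := by
    rw [norm_smul, Complex.norm_real, Real.norm_eq_abs, abs_of_pos hs]
  have htail : ‖exp ((s : ℂ) • x) - 1 - (s : ℂ) • x‖ ≤ s ^ 2 * C := by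
    calc ‖exp ((s : ℂ) • x) - 1 - (s : ℂ) • x‖
        ≤ ‖(s : ℂ) • x‖ ^ 2 * Real.exp ‖(s : ℂ) • x‖ := aux_exp_tail _
      _ = (s * ‖x‖) ^ 2 * Real.exp (s * ‖x‖) := by rw [hnorm]
      _ ≤ (s * ‖x‖) ^ 2 * Real.exp ‖x‖ := by
          gcongr
          calc s * ‖x‖ ≤ 1 * ‖x‖ := by gcongr
            _ = ‖x‖ := one_mul _
      _ = s ^ 2 * C := by rw [hC]; ring
  have htri : ‖1 + (s : ℂ) • x‖ ≤ ‖exp ((s : ℂ) • x)‖ + s ^ 2 * C := by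
    have : (1 : A) + (s : ℂ) • x =
        exp ((s : ℂ) • x) - (exp ((s : ℂ) • x) - 1 - (s : ℂ) • x) := by abel
    rw [this]
    exact (norm_sub_le _ _).trans (by gcongr)
  calc ‖1 + (s : ℂ) • x‖ ≤ 1 + s ^ 2 * C := by
        have := h s hs; linarith [htri]
    _ ≤ 1 + ε * s := by
        have : s ^ 2 * C ≤ ε * s := by
          have h1 : s * C ≤ ε := by
            calc s * C ≤ (ε / (C + 1)) * C := by gcongr
              _ ≤ ε := by
                rw [div_mul_eq_mul_div, div_le_iff₀ (by positivity)]
                nlinarith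
          calc s ^ 2 * C = s * (s * C) := by ring
            _ ≤ s * ε := by gcongr
            _ = ε * s := by ring
        linarith

lemma exp_le_one_of_diss {x : A} (hx : Diss x) : ‖exp x‖ ≤ 1 := by
  have main : ∀ ε : ℝ, 0 < ε → ‖exp x‖ ≤ Real.exp ε := by
    intro ε hε
    obtain ⟨δ, hδ, H⟩ := hx ε hε
    set C : ℝ := ‖x‖ ^ 2 * Real.exp ‖x‖ with hC
    have hC0 : 0 ≤ C := by positivity
    have key : ∀ n : ℕ, 1 ≤ n → (1 : ℝ) / n ≤ δ → ‖exp x‖ ≤ Real.exp (ε + C / n) := by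
      intro n hn hnδ
      have hn0 : (0 : ℝ) < n := by exact_mod_cast hn
      have hs : (0 : ℝ) < 1 / n := by positivity
      have hnorm : ‖((1 / n : ℝ) : ℂ) • x‖ = 1 / n * ‖x‖ := by
        rw [norm_smul, Complex.norm_real, Real.norm_eq_abs, abs_of_pos hs]
      have h1 : ‖exp (((1 / n : ℝ) : ℂ) • x) - 1 - ((1 / n : ℝ) : ℂ) • x‖ ≤ C / n ^ 2 := by
        calc ‖exp (((1 / n : ℝ) : ℂ) • x) - 1 - ((1 / n : ℝ) : ℂ) • x‖
            ≤ ‖((1 / n : ℝ) : ℂ) • x‖ ^ 2 * Real.exp ‖((1 / n : ℝ) : ℂ) • x‖ := aux_exp_tail _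
          _ = (1 / n * ‖x‖) ^ 2 * Real.exp (1 / n * ‖x‖) := by rw [hnorm]
          _ ≤ (1 / n * ‖x‖) ^ 2 * Real.exp ‖x‖ := by
              have hfr : 1 / (n : ℝ) * ‖x‖ ≤ ‖x‖ := by
                have h1n : 1 / (n : ℝ) ≤ 1 := (div_le_one hn0).2 (by exact_mod_cast hn)
                nlinarith [norm_nonneg x]
              gcongr
          _ = C / n ^ 2 := by rw [hC]; field_simp; try ring
      have h2 : ‖exp (((1 / n : ℝ) : ℂ) • x)‖ ≤ Real.exp (ε / n + C / n ^ 2) := by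
        have hH := H (1 / n) hs hnδ
        have htri : ‖exp (((1 / n : ℝ) : ℂ) • x)‖ ≤ ‖1 + ((1 / n : ℝ) : ℂ) • x‖ + C / n ^ 2 := by
          have heq : exp (((1 / n : ℝ) : ℂ) • x) =
              (1 + ((1 / n : ℝ) : ℂ) • x) +
                (exp (((1 / n : ℝ) : ℂ) • x) - 1 - ((1 / n : ℝ) : ℂ) • x) := by abel
          rw [heq]
          exact (norm_add_le _ _).trans (by gcongr)
        have hle : ‖exp (((1 / n : ℝ) : ℂ) • x)‖ ≤ 1 + (ε / n + C / n ^ 2) := by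
          have : ε * (1 / n) = ε / n := by ring
          rw [this] at hH
          linarith
        refine hle.trans ?_
        linarith [Real.add_one_le_exp (ε / n + C / n ^ 2)]
      have h3 : exp x = (exp (((1 / n : ℝ) : ℂ) • x)) ^ n := by
        letI : NormedAlgebra ℚ A := .restrictScalars ℚ ℂ A
        rw [← exp_nsmul]
        congr 1
        rw [← Nat.cast_smul_eq_nsmul ℂ, smul_smul]
        have : ((n : ℂ)) * ((1 / n : ℝ) : ℂ) = 1 := by
          push_cast
          rw [mul_one_div]
          exact div_self (Nat.cast_ne_zero.2 (by omega))
        rw [this, one_smul]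
      calc ‖exp x‖ = ‖(exp (((1 / n : ℝ) : ℂ) • x)) ^ n‖ := by rw [h3]
        _ ≤ ‖exp (((1 / n : ℝ) : ℂ) • x)‖ ^ n := norm_pow_le' _ (by omega)
        _ ≤ (Real.exp (ε / n + C / n ^ 2)) ^ n := pow_le_pow_left₀ (norm_nonneg _) h2 n
        _ = Real.exp (n * (ε / n + C / n ^ 2)) := by rw [← Real.exp_nat_mul]
        _ = Real.exp (ε + C / n) := by congr 1; field_simp
    have hten : Tendsto (fun n : ℕ => Real.exp (ε + C / n)) atTop (𝓝 (Real.exp ε)) := by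
      have h0 : Tendsto (fun n : ℕ => ε + C / n) atTop (𝓝 (ε + 0)) :=
        tendsto_const_nhds.add (tendsto_const_div_atTop_nhds_zero_nat C)
      rw [add_zero] at h0
      exact (Real.continuous_exp.tendsto _).comp h0
    refine ge_of_tendsto hten ?_
    have hev : ∀ᶠ n : ℕ in atTop, (1 : ℝ) / n ≤ δ :=
      tendsto_one_div_atTop_nhds_zero_nat.eventually (eventually_le_nhds hδ)
    filter_upwards [eventually_ge_atTop 1, hev] with n h1 h2 using key n h1 h2
  have h1 : Tendsto Real.exp (𝓝[>] (0 : ℝ)) (𝓝 1) := by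
    have := Real.continuous_exp.tendsto 0
    rw [Real.exp_zero] at this
    exact this.mono_left nhdsWithin_le_nhds
  refine ge_of_tendsto h1 ?_
  filter_upwards [self_mem_nhdsWithin] with ε hε using main ε hε

lemma exp_le_one_of_diss' {x : A} (hx : Diss x) {t : ℝ} (ht : 0 ≤ t) :
    ‖exp ((t : ℂ) • x)‖ ≤ 1 := by
  rcases ht.lt_or_eq with h | h
  · exact exp_le_one_of_diss (diss_smul hx h)
  · rw [← h]; simp [exp_zero]

lemma eq_zero_of_diss4 {x : A} (h1 : Diss x) (h2 : Diss (-x)) (h3 : Diss (Complex.I • x))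
    (h4 : Diss (-(Complex.I • x))) : x = 0 := by
  have hbd : ∀ z : ℂ, ‖exp (z • x)‖ ≤ 1 := by
    intro z
    have hz : z • x = (z.re : ℂ) • x + (z.im : ℂ) • (Complex.I • x) := by
      rw [smul_smul, ← add_smul]
      congr 1
      exact (Complex.re_add_im z).symm
    have hcomm : Commute ((z.re : ℂ) • x) ((z.im : ℂ) • (Complex.I • x)) := by
      rw [smul_smul]
      exact ((Commute.refl x).smul_left _).smul_right _
    letI : NormedAlgebra ℚ A := .restrictScalars ℚ ℂ A
    rw [hz, exp_add_of_commute hcomm]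
    have hre : ‖exp ((z.re : ℂ) • x)‖ ≤ 1 := by
      rcases le_or_gt 0 z.re with h | h
      · exact exp_le_one_of_diss' h1 h
      · have : ((z.re : ℝ) : ℂ) • x = (((-z.re : ℝ)) : ℂ) • (-x) := by
          push_cast; rw [smul_neg, neg_smul, neg_neg]
        rw [this]
        exact exp_le_one_of_diss' h2 (by linarith)
    have him : ‖exp ((z.im : ℂ) • (Complex.I • x))‖ ≤ 1 := by
      rcases le_or_gt 0 z.im with h | h
      · exact exp_le_one_of_diss' h3 h
      · have : ((z.im : ℝ) : ℂ) • (Complex.I • x) = (((-z.im : ℝ)) : ℂ) • (-(Complex.I • x)) := by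
          push_cast; rw [smul_neg, neg_smul, neg_neg]
        rw [this]
        exact exp_le_one_of_diss' h4 (by linarith)
    calc ‖exp ((z.re : ℂ) • x) * exp ((z.im : ℂ) • (Complex.I • x))‖
        ≤ ‖exp ((z.re : ℂ) • x)‖ * ‖exp ((z.im : ℂ) • (Complex.I • x))‖ := norm_mul_le _ _
      _ ≤ 1 * 1 := by gcongr
      _ = 1 := one_mul 1
  have hdiff : Differentiable ℂ (fun z : ℂ => exp (z • x)) := fun w =>
    (hasDerivAt_exp_smul_const x w).differentiableAt
  have hconst : ∀ z : ℂ, exp (z • x) = 1 := by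
    intro z
    rw [NormedSpace.eq_iff_forall_dual_eq ℂ]
    intro g
    have hgd : Differentiable ℂ (fun z : ℂ => g (exp (z • x))) :=
      g.differentiable.comp hdiff
    have hgb : Bornology.IsBounded (Set.range fun z : ℂ => g (exp (z • x))) := by
      rw [isBounded_iff_forall_norm_le]
      refine ⟨‖g‖, ?_⟩
      rintro _ ⟨w, rfl⟩
      calc ‖g (exp (w • x))‖ ≤ ‖g‖ * ‖exp (w • x)‖ := g.le_opNorm _
        _ ≤ ‖g‖ * 1 := by gcongr; exact hbd w
        _ = ‖g‖ := mul_one _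
    have := hgd.apply_eq_apply_of_bounded hgb z 0
    simpa [exp_zero] using this
  have hf : (fun z : ℂ => exp (z • x)) = fun _ => (1 : A) := funext hconst
  have hd0 : HasDerivAt (fun z : ℂ => exp (z • x)) (exp ((0 : ℂ) • x) * x) 0 :=
    hasDerivAt_exp_smul_const x 0
  rw [hf] at hd0
  have hd1 : HasDerivAt (fun _ : ℂ => (1 : A)) (0 : A) 0 := hasDerivAt_const 0 1
  have := hd0.unique hd1
  simpa [exp_zero] using this

end aux

/-- Weak*-continuity of a map between dual Banach spaces, each presented via an
isometric linear isomorphism onto the continuous dual of a given predual. -/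
def WStarContinuous {X Xp Y Yp : Type*}
    [SeminormedAddCommGroup X] [NormedSpace ℂ X]
    [NormedAddCommGroup Xp] [NormedSpace ℂ Xp]
    [SeminormedAddCommGroup Y] [NormedSpace ℂ Y]
    [NormedAddCommGroup Yp] [NormedSpace ℂ Yp]
    (ιX : X ≃ₗᵢ[ℂ] StrongDual ℂ Xp) (ιY : Y ≃ₗᵢ[ℂ] StrongDual ℂ Yp) (f : X → Y) : Prop :=
  Continuous fun φ : WeakDual ℂ Xp =>
    StrongDual.toWeakDual (ιY (f (ιX.symm (WeakDual.toStrongDual φ))))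

/-- Two unital contractive weak*-continuous homomorphisms from a W*-algebra `D`
generated (as a W*-algebra) by a unital subalgebra `M`, into a dual Banach
algebra, which agree on `M`, are equal. -/
theorem stmt4
    -- D : a W*-algebra with predual Dp
    (D : Type*) [NormedRing D] [StarRing D] [CStarRing D] [CompleteSpace D]
    [NormedAlgebra ℂ D] [StarModule ℂ D]
    (Dp : Type*) [NormedAddCommGroup Dp] [NormedSpace ℂ Dp]
    (ιD : D ≃ₗᵢ[ℂ] StrongDual ℂ Dp)
    -- M : a unital subalgebra generating D as a W*-algebra
    (M : Subalgebra ℂ D)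
    (hgen : Dense ((fun d : D => StrongDual.toWeakDual (ιD d)) ''
      (StarAlgebra.adjoin ℂ (M : Set D) : Set D)))
    -- B : a unital Banach algebra with ‖1‖ = 1 which is a dual Banach space
    (B : Type*) [NormedRing B] [NormedAlgebra ℂ B] [CompleteSpace B] [NormOneClass B]
    (Bp : Type*) [NormedAddCommGroup Bp] [NormedSpace ℂ Bp]
    (ιB : B ≃ₗᵢ[ℂ] StrongDual ℂ Bp)
    -- φ₁, φ₂ : unital contractive weak*-continuous homomorphisms
    (φ₁ φ₂ : D →ₐ[ℂ] B)
    (hcontr₁ : ∀ d : D, ‖φ₁ d‖ ≤ ‖d‖) (hcontr₂ : ∀ d : D, ‖φ₂ d‖ ≤ ‖d‖)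
    (hwc₁ : WStarContinuous ιD ιB φ₁) (hwc₂ : WStarContinuous ιD ιB φ₂)
    (hagree : ∀ a ∈ M, φ₁ a = φ₂ a) :
    φ₁ = φ₂ := by
  rcases subsingleton_or_nontrivial D with hD | hD
  · ext d
    rw [Subsingleton.elim d (0 : D)]
    simp
  -- contractive maps are continuous
  have hc₁ : Continuous φ₁ :=
    AddMonoidHomClass.continuous_of_bound φ₁ 1 (by simpa using hcontr₁)
  have hc₂ : Continuous φ₂ :=
    AddMonoidHomClass.continuous_of_bound φ₂ 1 (by simpa using hcontr₂)
  have hD1 : ‖(1 : D)‖ = 1 := norm_one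
  -- key: images of self-adjoint elements are "hermitian" in B
  have key : ∀ h : D, star h = h → ∀ φ : D →ₐ[ℂ] B, (∀ d, ‖φ d‖ ≤ ‖d‖) → Continuous φ →
      ∀ t : ℝ, ‖exp ((t : ℂ) • (Complex.I • φ h))‖ ≤ 1 := by
    intro h hh φ hφ hφc t
    letI : NormedAlgebra ℚ D := .restrictScalars ℚ ℂ D
    letI : NormedAlgebra ℚ B := .restrictScalars ℚ ℂ B
    have hsm : (t : ℂ) • (Complex.I • (φ h)) = φ (((t : ℂ) * Complex.I) • h) := by
      rw [map_smul, smul_smul]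
    rw [hsm, ← map_exp φ hφc]
    set u := exp (((t : ℂ) * Complex.I) • h) with hu
    have hstar : star (((t : ℂ) * Complex.I) • h) = -(((t : ℂ) * Complex.I) • h) := by
      rw [star_smul, hh, ← neg_smul]
      congr 1
      simp [Complex.ext_iff]
    have huu : star u * u = 1 := by
      rw [hu, star_exp, hstar,
        ← exp_add_of_commute (Commute.neg_left (Commute.refl _)), neg_add_cancel, exp_zero]
    have hun : ‖u‖ ≤ 1 := by
      have h2 : ‖u‖ * ‖u‖ = 1 := by rw [← CStarRing.norm_star_mul_self, huu, hD1]
      nlinarith [norm_nonneg u]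
    calc ‖φ u‖ ≤ ‖u‖ := hφ u
      _ ≤ 1 := hun
  -- conversion to dissipativity
  have mkdiss : ∀ y : B, (∀ t : ℝ, ‖exp ((t : ℂ) • y)‖ ≤ 1) → Diss y ∧ Diss (-y) := by
    intro y hy
    constructor
    · exact diss_of_exp_le fun t _ => hy t
    · refine diss_of_exp_le fun t _ => ?_
      have : (t : ℂ) • -y = ((-t : ℝ) : ℂ) • y := by
        match_scalars
        push_cast
        ring
      rw [this]; exact hy (-t)
  -- key star lemma
  have hstarlem : ∀ x : D, φ₁ x = φ₂ x → φ₁ (star x) = φ₂ (star x) := by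
    intro x hx
    obtain ⟨h, hhdef⟩ : ∃ h : D, h = (2⁻¹ : ℂ) • (x + star x) := ⟨_, rfl⟩
    obtain ⟨k, hkdef⟩ : ∃ k : D, k = ((2⁻¹ : ℂ) * Complex.I) • (star x - x) := ⟨_, rfl⟩
    have hhsa : star h = h := by
      rw [hhdef, star_smul, star_add, star_star]
      have : star (2⁻¹ : ℂ) = 2⁻¹ := by simp [Complex.ext_iff]
      rw [this, add_comm]
    have hksa : star k = k := by
      rw [hkdef, star_smul, star_sub, star_star]
      have h1 : star ((2⁻¹ : ℂ) * Complex.I) = -((2⁻¹ : ℂ) * Complex.I) := by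
        simp [Complex.ext_iff]
      rw [h1, neg_smul, smul_sub, smul_sub, neg_sub]
    have hxsplit : x = h + Complex.I • k := by
      rw [hhdef, hkdef]
      match_scalars <;> simp [Complex.ext_iff] <;> norm_num
    have hxstar : star x = h - Complex.I • k := by
      rw [hhdef, hkdef]
      match_scalars <;> simp [Complex.ext_iff] <;> norm_num
    obtain ⟨p, hp⟩ : ∃ p : B, p = φ₁ h - φ₂ h := ⟨_, rfl⟩
    obtain ⟨q, hq⟩ : ∃ q : B, q = φ₁ k - φ₂ k := ⟨_, rfl⟩
    have hpq : p + Complex.I • q = 0 := by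
      have h1 : φ₁ h + Complex.I • φ₁ k = φ₂ h + Complex.I • φ₂ k := by
        have hx' := hx
        rw [hxsplit] at hx'
        simpa [map_add, map_smul] using hx'
      rw [hp, hq, smul_sub, sub_add_sub_comm, h1, sub_self]
    have H1 := key h hhsa φ₁ hcontr₁ hc₁
    have H2 := key h hhsa φ₂ hcontr₂ hc₂
    have H3 := key k hksa φ₁ hcontr₁ hc₁
    have H4 := key k hksa φ₂ hcontr₂ hc₂
    obtain ⟨d1, d1'⟩ := mkdiss _ H1
    obtain ⟨d2, d2'⟩ := mkdiss _ H2
    obtain ⟨d3, d3'⟩ := mkdiss _ H3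
    obtain ⟨d4, d4'⟩ := mkdiss _ H4
    have hIp : Complex.I • p = Complex.I • φ₁ h + -(Complex.I • φ₂ h) := by
      rw [hp, smul_sub, sub_eq_add_neg]
    have dIp : Diss (Complex.I • p) := by rw [hIp]; exact diss_add d1 d2'
    have dIp' : Diss (-(Complex.I • p)) := by
      have : -(Complex.I • p) = -(Complex.I • φ₁ h) + Complex.I • φ₂ h := by
        rw [hIp]; abel
      rw [this]; exact diss_add d1' d2
    have hpneg : p = -(Complex.I • q) := eq_neg_of_add_eq_zero_left hpq
    have hIq : Complex.I • q = Complex.I • φ₁ k + -(Complex.I • φ₂ k) := by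
      rw [hq, smul_sub, sub_eq_add_neg]
    have dp : Diss p := by
      have : p = -(Complex.I • φ₁ k) + Complex.I • φ₂ k := by
        rw [hpneg, hIq]; abel
      rw [this]; exact diss_add d3' d4
    have dp' : Diss (-p) := by
      have : -p = Complex.I • φ₁ k + -(Complex.I • φ₂ k) := by
        rw [hpneg, hIq]; abel
      rw [this]; exact diss_add d3 d4'
    have hp0 : p = 0 := eq_zero_of_diss4 dp dp' dIp dIp'
    have hq0 : q = 0 := by
      have hIq0 : Complex.I • q = 0 := by
        have := hpq
        rw [hp0, zero_add] at this
        exact this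
      rcases smul_eq_zero.mp hIq0 with h' | h'
      · exact absurd h' Complex.I_ne_zero
      · exact h'
    have e1 : φ₁ h = φ₂ h := sub_eq_zero.mp (hp ▸ hp0)
    have e2 : φ₁ k = φ₂ k := sub_eq_zero.mp (hq ▸ hq0)
    rw [hxstar, map_sub, map_sub, map_smul, map_smul, e1, e2]
  -- agreement on the star subalgebra generated by M
  have hadj : ∀ d ∈ StarAlgebra.adjoin ℂ (M : Set D), φ₁ d = φ₂ d := by
    intro d hd
    refine StarAlgebra.adjoin_induction (fun x hx => hagree x hx) (fun r => ?_)
      (fun x y _ _ hx hy => ?_) (fun x y _ _ hx hy => ?_)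
      (fun x _ hx => hstarlem x hx) hd
    · rw [AlgHom.commutes, AlgHom.commutes]
    · rw [map_add, map_add, hx, hy]
    · rw [map_mul, map_mul, hx, hy]
  -- conclude by weak* density
  have hclosed : IsClosed {ψ : WeakDual ℂ Dp |
      StrongDual.toWeakDual (ιB (φ₁ (ιD.symm (WeakDual.toStrongDual ψ)))) =
      StrongDual.toWeakDual (ιB (φ₂ (ιD.symm (WeakDual.toStrongDual ψ))))} :=
    isClosed_eq hwc₁ hwc₂
  have hsub : (fun d : D => StrongDual.toWeakDual (ιD d)) ''
      (StarAlgebra.adjoin ℂ (M : Set D) : Set D) ⊆ {ψ : WeakDual ℂ Dp |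
      StrongDual.toWeakDual (ιB (φ₁ (ιD.symm (WeakDual.toStrongDual ψ)))) =
      StrongDual.toWeakDual (ιB (φ₂ (ιD.symm (WeakDual.toStrongDual ψ))))} := by
    rintro _ ⟨d, hd, rfl⟩
    show StrongDual.toWeakDual (ιB (φ₁ (ιD.symm (WeakDual.toStrongDual (StrongDual.toWeakDual (ιD d)))))) = _
    rw [show WeakDual.toStrongDual (StrongDual.toWeakDual (ιD d)) = ιD d from rfl,
      ιD.symm_apply_apply, hadj d hd]
  have hall : ∀ ψ : WeakDual ℂ Dp,
      StrongDual.toWeakDual (ιB (φ₁ (ιD.symm (WeakDual.toStrongDual ψ)))) =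
      StrongDual.toWeakDual (ιB (φ₂ (ιD.symm (WeakDual.toStrongDual ψ)))) := by
    intro ψ
    have := (hclosed.closure_subset_iff.mpr hsub) (by rw [hgen.closure_eq]; trivial :
      ψ ∈ closure ((fun d : D => StrongDual.toWeakDual (ιD d)) ''
        (StarAlgebra.adjoin ℂ (M : Set D) : Set D)))
    exact this
  ext d
  have hthis := hall (StrongDual.toWeakDual (ιD d))
  rw [show WeakDual.toStrongDual (StrongDual.toWeakDual (ιD d)) = ιD d from rfl,
    ιD.symm_apply_apply] at hthis
  have h2 : ιB (φ₁ d) = ιB (φ₂ d) := StrongDual.toWeakDual.injective hthis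
  exact ιB.injective h2
end

section
/- Let D be a W*-algebra and let M be a subalgebra of D containing the unit of D such that the star-subalgebra of D generated by M is weak*-dense in D. Let H₁ and H₂ be complex Hilbert spaces and for i = 1, 2 let πᵢ : D → B(Hᵢ) be a unital contractive algebra homomorphism into the bounded operators on Hᵢ that is continuous from the weak* topology of D to the weak operator topology of B(Hᵢ). If U : H₁ → H₂ is a unitary operator satisfying U∘π₁(a) = π₂(a)∘U for all a ∈ M, then U∘π₁(d) = π₂(d)∘U for all d ∈ D. -/
open NormedSpace
open scoped InnerProductSpace

/-- A unital contractive algebra homomorphism from a C*-algebra into `B(H)`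
maps selfadjoint elements to selfadjoint operators. -/
theorem aux_sa {D : Type*} [NormedRing D] [StarRing D] [CStarRing D] [CompleteSpace D]
    [NormedAlgebra ℂ D] [StarModule ℂ D]
    {H : Type*} [NormedAddCommGroup H] [InnerProductSpace ℂ H] [CompleteSpace H]
    (π : D →ₐ[ℂ] (H →L[ℂ] H)) (hcontr : ∀ d, ‖π d‖ ≤ ‖d‖)
    {a : D} (ha : IsSelfAdjoint a) : IsSelfAdjoint (π a) := by
  rcases subsingleton_or_nontrivial D with hD | hD
  · have h0 : a = 0 := Subsingleton.elim _ _
    simp only [h0, map_zero]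
    exact star_zero _
  have hπc : Continuous π := AddMonoidHomClass.continuous_of_bound π 1 (by simpa using hcontr)
  set T : H →L[ℂ] H := π a with hT
  set A : H →L[ℂ] H := Complex.I • T with hA
  have hnorm : ∀ t : ℝ, ‖exp (t • A)‖ ≤ 1 := by
    intro t
    have hsa : IsSelfAdjoint ((t : ℂ) • a) := by
      rw [IsSelfAdjoint, star_smul, ha.star_eq]
      simp
    have hu : exp (Complex.I • ((t : ℂ) • a)) ∈ unitary D :=
      (selfAdjoint.expUnitary ⟨_, hsa⟩).2
    have h1 : (t • A : H →L[ℂ] H) = π (Complex.I • ((t : ℂ) • a)) := by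
      rw [map_smul, map_smul, hA, ← hT, smul_comm, Complex.coe_smul]
    have h2 : exp (t • A) = π (exp (Complex.I • ((t : ℂ) • a))) := by
      rw [map_exp_of_mem_ball (𝕂 := ℂ) π hπc (Complex.I • ((t : ℂ) • a))
        ((expSeries_radius_eq_top ℂ D).symm ▸ edist_lt_top _ _), ← h1]
    rw [h2]
    calc ‖π (exp (Complex.I • ((t : ℂ) • a)))‖ ≤ ‖exp (Complex.I • ((t : ℂ) • a))‖ :=
          hcontr _
      _ = 1 := CStarRing.norm_coe_unitary ⟨_, hu⟩
  have key : ∀ ξ : H, (⟪T ξ, ξ⟫_ℂ).im = 0 := by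
    intro ξ
    have hB : HasDerivAt (fun t : ℝ => exp (t • A)) A 0 := by
      simpa using hasDerivAt_exp_smul_const A (0 : ℝ)
    have h0 : exp ((0 : ℝ) • A) ξ = ξ := by simp
    set e : (H →L[ℂ] H) →L[ℝ] H :=
      ((ContinuousLinearMap.apply ℂ H ξ)).restrictScalars ℝ with he
    have hg : HasDerivAt (fun t : ℝ => exp (t • A) ξ) (A ξ) 0 := by
      have := (e.hasFDerivAt (x := exp ((0 : ℝ) • A))).comp_hasDerivAt 0 hB
      simpa [he, Function.comp_def] using this
    have hf : HasDerivAt (fun t : ℝ => (⟪exp (t • A) ξ, exp (t • A) ξ⟫_ℂ))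
        (⟪exp ((0 : ℝ) • A) ξ, A ξ⟫_ℂ + ⟪A ξ, exp ((0 : ℝ) • A) ξ⟫_ℂ) 0 :=
      HasDerivAt.inner ℂ hg hg
    have hF : HasDerivAt (fun t : ℝ => (⟪exp (t • A) ξ, exp (t • A) ξ⟫_ℂ).re)
        ((⟪ξ, A ξ⟫_ℂ + ⟪A ξ, ξ⟫_ℂ).re) 0 := by
      have := (Complex.reCLM.hasFDerivAt).comp_hasDerivAt 0 hf
      simpa [h0, Function.comp_def] using this
    have hmax : IsLocalMax (fun t : ℝ => (⟪exp (t • A) ξ, exp (t • A) ξ⟫_ℂ).re) 0 := by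
      apply Filter.Eventually.of_forall
      intro t
      have hre : ∀ v : H, (⟪v, v⟫_ℂ).re = ‖v‖ ^ 2 := by
        intro v
        have := inner_self_eq_norm_sq (𝕜 := ℂ) v
        simpa using this
      simp only [hre, h0]
      have hb : ‖exp (t • A) ξ‖ ≤ ‖ξ‖ := by
        calc ‖exp (t • A) ξ‖ ≤ ‖exp (t • A)‖ * ‖ξ‖ := (exp (t • A)).le_opNorm ξ
          _ ≤ 1 * ‖ξ‖ := by gcongr; exact hnorm t
          _ = ‖ξ‖ := one_mul _
      exact pow_le_pow_left₀ (norm_nonneg _) hb 2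
    have hz := hmax.hasDerivAt_eq_zero hF
    have hw : (⟪A ξ, ξ⟫_ℂ) = (-Complex.I) * ⟪T ξ, ξ⟫_ℂ := by
      rw [hA]
      simp [inner_smul_left, Complex.conj_I, mul_comm]
    have hconj : (⟪ξ, A ξ⟫_ℂ) = (starRingEnd ℂ) (⟪A ξ, ξ⟫_ℂ) := (inner_conj_symm ξ (A ξ)).symm
    rw [Complex.add_re, hconj, Complex.conj_re, hw] at hz
    have : (2 : ℝ) * ((-Complex.I) * ⟪T ξ, ξ⟫_ℂ).re = 0 := by linarith
    have h2 : ((-Complex.I) * ⟪T ξ, ξ⟫_ℂ).re = 0 := by linarith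
    simpa [Complex.mul_re] using h2
  rw [ContinuousLinearMap.isSelfAdjoint_iff_isSymmetric,
    LinearMap.isSymmetric_iff_inner_map_self_real]
  intro v
  exact Complex.conj_eq_iff_im.mpr (key v)

/-- A unital contractive algebra homomorphism from a C*-algebra into `B(H)` is
automatically a star homomorphism. -/
theorem aux_star {D : Type*} [NormedRing D] [StarRing D] [CStarRing D] [CompleteSpace D]
    [NormedAlgebra ℂ D] [StarModule ℂ D]
    {H : Type*} [NormedAddCommGroup H] [InnerProductSpace ℂ H] [CompleteSpace H]
    (π : D →ₐ[ℂ] (H →L[ℂ] H)) (hcontr : ∀ d, ‖π d‖ ≤ ‖d‖)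
    (d : D) : π (star d) = star (π d) := by
  have h1 : IsSelfAdjoint (d + star d) := by
    rw [IsSelfAdjoint, star_add, star_star, add_comm]
  have h2 : IsSelfAdjoint (Complex.I • (d - star d)) := by
    rw [IsSelfAdjoint, star_smul, star_sub, star_star, Complex.star_def, Complex.conj_I,
      neg_smul, smul_sub, smul_sub, neg_sub]
  have e1 := (aux_sa π hcontr h1).star_eq
  have e2 := (aux_sa π hcontr h2).star_eq
  rw [map_add] at e1
  rw [map_smul, map_sub] at e2
  rw [star_add] at e1
  rw [star_smul, star_sub, Complex.star_def, Complex.conj_I, neg_smul] at e2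
  -- e1 : star (π d) + star (π (star d)) = π d + π (star d)
  -- e2 : -(I • (star (π d) - star (π (star d)))) = I • (π d - π (star d))
  have e2' : star (π d) - star (π (star d)) = -(π d - π (star d)) := by
    have := congrArg (fun x => Complex.I • x) e2
    simp only [smul_neg, smul_smul, Complex.I_mul_I, neg_smul, one_smul, neg_neg] at this
    have h3 : Complex.I • (Complex.I • (star (π d) - star (π (star d)))) =
        -(star (π d) - star (π (star d))) := by
      rw [smul_smul, Complex.I_mul_I, neg_smul, one_smul]
    have h4 : Complex.I • (Complex.I • (π d - π (star d))) = -(π d - π (star d)) := by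
      rw [smul_smul, Complex.I_mul_I, neg_smul, one_smul]
    have h5 := congrArg (fun x => Complex.I • x) e2
    rw [smul_neg, h3, smul_smul, Complex.I_mul_I, neg_smul, one_smul] at h5
    -- h5 : -(-(star (π d) - star (π (star d)))) = -(π d - π (star d))
    rw [neg_neg] at h5
    rw [h5]
  have key : star (π d) + star (π d) = π (star d) + π (star d) := by
    have hsum := congrArg₂ (· + ·) e1 e2'
    abel_nf at hsum ⊢
    exact hsum
  have h2s : (2 : ℂ) • star (π d) = (2 : ℂ) • π (star d) := by
    rw [two_smul, two_smul]
    exact key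
  exact (smul_right_injective _ (two_ne_zero : (2 : ℂ) ≠ 0) h2s).symm

/-- A unitary intertwiner of two unital contractive weak*-to-WOT continuous
representations of a W*-algebra `D` which intertwines the representations on a
weak*-generating unital subalgebra `M` intertwines them on all of `D`. -/
theorem stmt7
    -- D : a W*-algebra with predual Dp
    (D : Type*) [NormedRing D] [StarRing D] [CStarRing D] [CompleteSpace D]
    [NormedAlgebra ℂ D] [StarModule ℂ D]
    (Dp : Type*) [NormedAddCommGroup Dp] [NormedSpace ℂ Dp]
    (ιD : D ≃ₗᵢ[ℂ] StrongDual ℂ Dp)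
    -- M : a unital subalgebra generating D as a W*-algebra
    (M : Subalgebra ℂ D)
    (hgen : Dense ((fun d : D => StrongDual.toWeakDual (ιD d)) ''
      (StarAlgebra.adjoin ℂ (M : Set D) : Set D)))
    -- H₁, H₂ : complex Hilbert spaces
    (H₁ : Type*) [NormedAddCommGroup H₁] [InnerProductSpace ℂ H₁] [CompleteSpace H₁]
    (H₂ : Type*) [NormedAddCommGroup H₂] [InnerProductSpace ℂ H₂] [CompleteSpace H₂]
    -- π₁, π₂ : unital contractive homomorphisms, continuous from weak* to WOT
    (π₁ : D →ₐ[ℂ] (H₁ →L[ℂ] H₁)) (π₂ : D →ₐ[ℂ] (H₂ →L[ℂ] H₂))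
    (hcontr₁ : ∀ d : D, ‖π₁ d‖ ≤ ‖d‖) (hcontr₂ : ∀ d : D, ‖π₂ d‖ ≤ ‖d‖)
    (hwot₁ : ∀ (ξ η : H₁), Continuous fun φ : WeakDual ℂ Dp =>
      ⟪(π₁ (ιD.symm (WeakDual.toStrongDual φ))) ξ, η⟫_ℂ)
    (hwot₂ : ∀ (ξ η : H₂), Continuous fun φ : WeakDual ℂ Dp =>
      ⟪(π₂ (ιD.symm (WeakDual.toStrongDual φ))) ξ, η⟫_ℂ)
    -- U : a unitary intertwining π₁ and π₂ on M
    (U : H₁ ≃ₗᵢ[ℂ] H₂)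
    (hU : ∀ a ∈ M, ∀ ξ : H₁, U (π₁ a ξ) = π₂ a (U ξ)) :
    ∀ (d : D) (ξ : H₁), U (π₁ d ξ) = π₂ d (U ξ) := by
  have hUinner : ∀ (x : H₁) (y : H₂), ⟪U x, y⟫_ℂ = ⟪x, U.symm y⟫_ℂ := by
    intro x y
    conv_lhs => rw [← U.apply_symm_apply y]
    exact U.inner_map_map x (U.symm y)
  -- the intertwining holds on the star-subalgebra generated by M
  have hadj : ∀ d ∈ StarAlgebra.adjoin ℂ (M : Set D), ∀ ξ : H₁,
      U (π₁ d ξ) = π₂ d (U ξ) := by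
    intro d hd
    induction hd using StarAlgebra.adjoin_induction with
    | mem x hx => exact hU x hx
    | algebraMap r =>
      intro ξ
      simp only [AlgHom.commutes]
      simp [Algebra.algebraMap_eq_smul_one]
    | add x y hx hy ihx ihy =>
      intro ξ
      simp only [map_add, ContinuousLinearMap.add_apply, map_add, ihx, ihy]
    | mul x y hx hy ihx ihy =>
      intro ξ
      simp only [map_mul, ContinuousLinearMap.mul_apply, ihx, ihy]
    | star x hx ihx =>
      intro ξ
      apply ext_inner_right ℂ
      intro η
      rw [hUinner]
      rw [aux_star π₁ hcontr₁, aux_star π₂ hcontr₂]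
      rw [ContinuousLinearMap.star_eq_adjoint, ContinuousLinearMap.star_eq_adjoint]
      rw [ContinuousLinearMap.adjoint_inner_left, ContinuousLinearMap.adjoint_inner_left]
      have hx' : π₁ x (U.symm η) = U.symm (π₂ x η) := by
        have := ihx (U.symm η)
        rw [U.apply_symm_apply] at this
        exact (U.symm_apply_eq.mpr this.symm).symm
      rw [hx']
      rw [← hUinner]
  intro d ξ
  apply ext_inner_right ℂ
  intro η
  -- both sides are continuous in d with respect to the weak-* topology
  have hcont : Continuous fun φ : WeakDual ℂ Dp =>
      (⟪(π₁ (ιD.symm (WeakDual.toStrongDual φ))) ξ, U.symm η⟫_ℂ -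
        ⟪(π₂ (ιD.symm (WeakDual.toStrongDual φ))) (U ξ), η⟫_ℂ) :=
    (hwot₁ ξ (U.symm η)).sub (hwot₂ (U ξ) η)
  have heq : (fun φ : WeakDual ℂ Dp =>
      (⟪(π₁ (ιD.symm (WeakDual.toStrongDual φ))) ξ, U.symm η⟫_ℂ -
        ⟪(π₂ (ιD.symm (WeakDual.toStrongDual φ))) (U ξ), η⟫_ℂ)) = fun _ => 0 := by
    apply Continuous.ext_on hgen hcont continuous_const
    rintro φ ⟨e, he, rfl⟩
    have hsymm : ιD.symm (WeakDual.toStrongDual (StrongDual.toWeakDual (ιD e))) = e := by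
      simp
    simp only [hsymm]
    rw [← hUinner, hadj e he ξ, sub_self]
  have := congrFun heq (StrongDual.toWeakDual (ιD d))
  have hsymm : ιD.symm (WeakDual.toStrongDual (StrongDual.toWeakDual (ιD d))) = d := by simp
  rw [hsymm] at this
  rw [hUinner]
  exact sub_eq_zero.mp this
end
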